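/- arXiv:1112.5314 — 6 statements merged into one kernel-verified Lean document; each statement's English description precedes it below -/
import Mathlib

section
/- Noncoherent case of Theorem 1: Let σ > 0. For x ∈ ℂ let P_x = 𝒩_ℂ(0, |x|² + σ²). Then sup over ξ ∈ ℂ \ {0} and Borel sets D ⊆ ℝ² of d(P_ξ(D) ‖ P_0(D)) / |ξ|² < 1/σ², with strict inequality. In particular, quantizing the output of the noncoherent Rayleigh-fading channel with any one-bit quantizer strictly reduces the capacity per unit-energy below the unquantized value 1/σ². -/
open MeasureTheory ProbabilityTheory Complex
open scoped ENNReal NNReal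
open Set Filter
open scoped Real Topology

/-- Circularly symmetric complex Gaussian measure `𝒩_ℂ(m, v)` on `ℂ ≅ ℝ²`:
the product of two real Gaussians with means `Re m`, `Im m` and variance `v/2` each. -/
noncomputable def cgauss (m : ℂ) (v : ℝ) : Measure ℂ :=
  Measure.map Complex.measurableEquivRealProd.symm
    ((gaussianReal m.re (v / 2).toNNReal).prod (gaussianReal m.im (v / 2).toNNReal))

/-- Binary relative entropy `d(p‖q)`, i.e. the Kullback–Leibler divergence between
`Bernoulli(p)` and `Bernoulli(q)`, with the conventions `0·log 0 = 0` and
`d(p‖q) = +∞` if `q ∈ {0,1}` and `p ≠ q`. -/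
noncomputable def bre (p q : ℝ) : ℝ≥0∞ :=
  if (q = 0 ∨ q = 1) ∧ p ≠ q then ⊤
  else ENNReal.ofReal (p * Real.log (p / q) + (1 - p) * Real.log ((1 - p) / (1 - q)))


noncomputable def P2 (v : ℝ) : Measure (ℝ × ℝ) :=
  (gaussianReal 0 (v / 2).toNNReal).prod (gaussianReal 0 (v / 2).toNNReal)

noncomputable def dens2 (v : ℝ) (p : ℝ × ℝ) : ℝ≥0∞ :=
  ENNReal.ofReal ((Real.pi * v)⁻¹ * Real.exp (-(p.1 ^ 2 + p.2 ^ 2) / v))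

instance (v : ℝ) : IsProbabilityMeasure (P2 v) := by
  unfold P2; infer_instance

lemma dens2_eq (v : ℝ) (hv : 0 < v) (p : ℝ × ℝ) :
    dens2 v p = gaussianPDF 0 (v / 2).toNNReal p.1 * gaussianPDF 0 (v / 2).toNNReal p.2 := by
  have hc : ((v / 2).toNNReal : ℝ) = v / 2 := Real.coe_toNNReal _ (by linarith)
  have hπv : 0 < Real.pi * v := by positivity
  rw [gaussianPDF, gaussianPDF, ← ENNReal.ofReal_mul (gaussianPDFReal_nonneg _ _ _)]
  unfold dens2
  congr 1
  rw [gaussianPDFReal, gaussianPDFReal, hc]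
  have h2 : 2 * Real.pi * (v / 2) = Real.pi * v := by ring
  rw [h2]
  have hs : (Real.sqrt (Real.pi * v))⁻¹ * Real.exp (-(p.1 - 0) ^ 2 / (2 * (v / 2))) *
      ((Real.sqrt (Real.pi * v))⁻¹ * Real.exp (-(p.2 - 0) ^ 2 / (2 * (v / 2))))
      = ((Real.sqrt (Real.pi * v))⁻¹ * (Real.sqrt (Real.pi * v))⁻¹) *
        (Real.exp (-(p.1 - 0) ^ 2 / (2 * (v / 2))) * Real.exp (-(p.2 - 0) ^ 2 / (2 * (v / 2)))) := by
    ring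
  rw [hs, ← Real.exp_add, ← mul_inv, Real.mul_self_sqrt hπv.le]
  congr 1
  field_simp
  ring

lemma P2_eq_withDensity (v : ℝ) (hv : 0 < v) :
    P2 v = (volume : Measure (ℝ × ℝ)).withDensity (dens2 v) := by
  have hv2 : (v / 2).toNNReal ≠ 0 := by
    simp [Real.toNNReal_eq_zero]; linarith
  unfold P2
  apply Measure.prod_eq
  intro s t hs ht
  rw [withDensity_apply _ (hs.prod ht)]
  have : (volume : Measure (ℝ × ℝ)).restrict (s ×ˢ t)
      = (volume.restrict s).prod (volume.restrict t) := (Measure.prod_restrict s t).symm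
  rw [this]
  have hmeas : Measurable (gaussianPDF 0 (v / 2).toNNReal) := measurable_gaussianPDF _ _
  calc ∫⁻ p, dens2 v p ∂(volume.restrict s).prod (volume.restrict t)
      = ∫⁻ p : ℝ × ℝ, gaussianPDF 0 (v / 2).toNNReal p.1 * gaussianPDF 0 (v / 2).toNNReal p.2
          ∂(volume.restrict s).prod (volume.restrict t) := by
        apply lintegral_congr; intro p; exact dens2_eq v hv p
    _ = (∫⁻ x in s, gaussianPDF 0 (v / 2).toNNReal x)
          * ∫⁻ y in t, gaussianPDF 0 (v / 2).toNNReal y :=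
        lintegral_prod_mul hmeas.aemeasurable hmeas.aemeasurable
    _ = gaussianReal 0 (v / 2).toNNReal s * gaussianReal 0 (v / 2).toNNReal t := by
        rw [gaussianReal_apply _ hv2, gaussianReal_apply _ hv2]


lemma integral_rho (b r : ℝ) (hb : 0 < b) :
    ∫ ρ in Ioi r, ρ * Real.exp (-b * ρ ^ 2) = (2 * b)⁻¹ * Real.exp (-b * r ^ 2) := by
  have A : ∀ x : ℝ, HasDerivAt (fun x : ℝ => -(2 * b)⁻¹ * Real.exp (-b * x ^ 2))
      (x * Real.exp (-b * x ^ 2)) x := by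
    intro x
    convert ((hasDerivAt_pow 2 x).const_mul (-b)).exp.const_mul (-(2 * b)⁻¹) using 1
    · rfl
    · rfl
    field_simp
    ring
  have B : Tendsto (fun x : ℝ => -(2 * b)⁻¹ * Real.exp (-b * x ^ 2)) atTop (𝓝 (-(2 * b)⁻¹ * 0)) := by
    refine Tendsto.const_mul _ ?_
    refine Real.tendsto_exp_atBot.comp ?_
    exact (tendsto_pow_atTop two_ne_zero).const_mul_atTop_of_neg (neg_lt_zero.2 hb)
  have := integral_Ioi_of_hasDerivAt_of_tendsto' (a := r)
    (f := fun x : ℝ => -(2 * b)⁻¹ * Real.exp (-b * x ^ 2))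
    (fun x _ => A x) ((integrable_mul_exp_neg_mul_sq hb).integrableOn) B
  rw [this]
  ring

lemma measurableSet_tail (r : ℝ) : MeasurableSet {p : ℝ × ℝ | r ^ 2 ≤ p.1 ^ 2 + p.2 ^ 2} := by
  apply measurableSet_le measurable_const
  fun_prop

lemma P2_tail_integral (v r : ℝ) (hv : 0 < v) (hr : 0 ≤ r) :
    ∫ p : ℝ × ℝ in {p : ℝ × ℝ | r ^ 2 ≤ p.1 ^ 2 + p.2 ^ 2},
      (Real.pi * v)⁻¹ * Real.exp (-(p.1 ^ 2 + p.2 ^ 2) / v) = Real.exp (-r ^ 2 / v) := by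
  set S := {p : ℝ × ℝ | r ^ 2 ≤ p.1 ^ 2 + p.2 ^ 2} with hS
  set gR : ℝ × ℝ → ℝ := fun p => (Real.pi * v)⁻¹ * Real.exp (-(p.1 ^ 2 + p.2 ^ 2) / v) with hgR
  have h1 : ∫ p : ℝ × ℝ in S, gR p = ∫ p : ℝ × ℝ, S.indicator gR p := by
    rw [integral_indicator (measurableSet_tail r)]
  rw [h1, ← integral_comp_polarCoord_symm]
  have key : ∫ p in polarCoord.target, p.1 • (S.indicator gR (polarCoord.symm p))
      = (∫ x in Ioi (0:ℝ), (Ici r).indicator (fun ρ => ρ * ((Real.pi * v)⁻¹ * Real.exp (-ρ ^ 2 / v))) x)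
        * ∫ _ in Ioo (-Real.pi) Real.pi, (1:ℝ) := by
    rw [Measure.volume_eq_prod, ← setIntegral_prod_mul]
    apply setIntegral_congr_fun (polarCoord.open_target.measurableSet)
    intro p hp
    have hp1 : 0 < p.1 := hp.1
    have hps : polarCoord.symm p = (p.1 * Real.cos p.2, p.1 * Real.sin p.2) := rfl
    have habs : (polarCoord.symm p).1 ^ 2 + (polarCoord.symm p).2 ^ 2 = p.1 ^ 2 := by
      rw [hps]
      simp only
      nlinarith [Real.sin_sq_add_cos_sq p.2]
    have hmem : polarCoord.symm p ∈ S ↔ p.1 ∈ Ici r := by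
      simp only [hS, mem_setOf_eq, habs, mem_Ici]
      constructor
      · intro h
        exact le_of_pow_le_pow_left₀ two_ne_zero hp1.le (by nlinarith)
      · intro h
        nlinarith
    dsimp only
    by_cases hc : p.1 ∈ Ici r
    · rw [Set.indicator_of_mem (hmem.mpr hc), Set.indicator_of_mem hc]
      simp only [smul_eq_mul, hgR, habs, mul_one]
    · rw [Set.indicator_of_notMem (fun h => hc (hmem.mp h)), Set.indicator_of_notMem hc]
      simp
  rw [key]
  have h3 : ∫ x in Ioi (0:ℝ), (Ici r).indicator (fun ρ => ρ * ((Real.pi * v)⁻¹ * Real.exp (-ρ ^ 2 / v))) x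
      = ∫ ρ in Ioi r, ρ * ((Real.pi * v)⁻¹ * Real.exp (-ρ ^ 2 / v)) := by
    rw [setIntegral_indicator measurableSet_Ici]
    apply setIntegral_congr_set
    have e1 : (Ioi (0:ℝ) ∩ Ici r : Set ℝ) =ᵐ[(volume : Measure ℝ)] (Ioi (0:ℝ) ∩ Ioi r : Set ℝ) :=
      (Filter.EventuallyEq.refl _ _).inter Ioi_ae_eq_Ici.symm
    refine e1.trans ?_
    rw [Ioi_inter_Ioi, sup_eq_right.mpr hr]
    exact Filter.EventuallyEq.rfl
  rw [h3]
  have h4 : ∫ ρ in Ioi r, ρ * ((Real.pi * v)⁻¹ * Real.exp (-ρ ^ 2 / v))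
      = (Real.pi * v)⁻¹ * ((2 * v⁻¹)⁻¹ * Real.exp (-v⁻¹ * r ^ 2)) := by
    rw [← integral_rho v⁻¹ r (by positivity), ← integral_const_mul]
    congr 1
    ext ρ
    rw [neg_div, div_eq_inv_mul, ← neg_mul]
    ring
  rw [h4]
  simp only [integral_const, MeasurableSet.univ, Measure.restrict_apply, univ_inter,
    Real.volume_Ioo, smul_eq_mul]
  rw [measureReal_restrict_apply_univ, Real.volume_real_Ioo, max_eq_left (by linarith [Real.pi_pos])]
  rw [neg_div, div_eq_inv_mul, ← neg_mul]
  have hπ := Real.pi_pos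
  field_simp
  ring

lemma integrable_dens2R (v : ℝ) (hv : 0 < v) :
    Integrable (fun p : ℝ × ℝ => (Real.pi * v)⁻¹ * Real.exp (-(p.1 ^ 2 + p.2 ^ 2) / v)) := by
  have hb : 0 < v⁻¹ := by positivity
  have h := ((integrable_exp_neg_mul_sq hb).mul_prod (integrable_exp_neg_mul_sq hb)).const_mul
    ((Real.pi * v)⁻¹)
  rw [Measure.volume_eq_prod]
  convert h using 2 with p
  · rfl
  rw [← Real.exp_add]
  congr 1
  field_simp
  ring

lemma P2_tail (v r : ℝ) (hv : 0 < v) (hr : 0 ≤ r) :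
    P2 v {p : ℝ × ℝ | r ^ 2 ≤ p.1 ^ 2 + p.2 ^ 2} = ENNReal.ofReal (Real.exp (-r ^ 2 / v)) := by
  have hnn : 0 ≤ᵐ[(volume : Measure (ℝ × ℝ)).restrict {p : ℝ × ℝ | r ^ 2 ≤ p.1 ^ 2 + p.2 ^ 2}]
      (fun p : ℝ × ℝ => (Real.pi * v)⁻¹ * Real.exp (-(p.1 ^ 2 + p.2 ^ 2) / v)) :=
    ae_of_all _ fun p => by positivity
  have h := ofReal_integral_eq_lintegral_ofReal
    ((integrable_dens2R v hv).integrableOn (s := {p : ℝ × ℝ | r ^ 2 ≤ p.1 ^ 2 + p.2 ^ 2})) hnn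
  rw [P2_eq_withDensity v hv, withDensity_apply _ (measurableSet_tail r)]
  have hgoal : ∫⁻ p in {p : ℝ × ℝ | r ^ 2 ≤ p.1 ^ 2 + p.2 ^ 2}, dens2 v p = ENNReal.ofReal
      (∫ p in {p : ℝ × ℝ | r ^ 2 ≤ p.1 ^ 2 + p.2 ^ 2},
        (Real.pi * v)⁻¹ * Real.exp (-(p.1 ^ 2 + p.2 ^ 2) / v)) := h.symm
  rw [hgoal, P2_tail_integral v r hv hr]

noncomputable def Lr (a b : ℝ) (p : ℝ × ℝ) : ℝ≥0∞ :=
  ENNReal.ofReal ((a / b) * Real.exp ((p.1 ^ 2 + p.2 ^ 2) * (1 / a - 1 / b)))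

lemma measurable_Lr (a b : ℝ) : Measurable (Lr a b) :=
  ENNReal.measurable_ofReal.comp (by fun_prop)

lemma measurable_dens2 (v : ℝ) : Measurable (dens2 v) :=
  ENNReal.measurable_ofReal.comp (by fun_prop)

lemma P2_ratio (a b : ℝ) (ha : 0 < a) (hab : a ≤ b) :
    P2 b = (P2 a).withDensity (Lr a b) := by
  have hb : 0 < b := lt_of_lt_of_le ha hab
  rw [P2_eq_withDensity a ha, P2_eq_withDensity b hb,
    ← withDensity_mul _ (measurable_dens2 a) (measurable_Lr a b)]
  apply congrArg
  funext p
  unfold dens2 Lr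
  rw [Pi.mul_apply, ← ENNReal.ofReal_mul (by positivity)]
  congr 1
  rw [mul_mul_mul_comm, ← Real.exp_add]
  have hπ := Real.pi_pos
  congr 1
  · field_simp
  · field_simp
    congr 1; field_simp; ring

lemma P2_NP (a b : ℝ) (ha : 0 < a) (hab : a ≤ b) {F : Set (ℝ × ℝ)} (hF : MeasurableSet F) :
    P2 b F ≤ (P2 a F) ^ (a / b) := by
  have hb : 0 < b := lt_of_lt_of_le ha hab
  by_cases h0 : P2 a F = 0
  · have hz : P2 b F = 0 := by
      rw [P2_ratio a b ha hab]
      exact (withDensity_absolutelyContinuous _ _) h0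
    rw [hz]
    exact zero_le
  · set y := (P2 a F).toReal with hy
    have hyfin : P2 a F ≠ ⊤ := measure_ne_top _ _
    have hy0 : 0 < y := ENNReal.toReal_pos h0 hyfin
    have hyle1 : P2 a F ≤ 1 := prob_le_one
    have hy1 : y ≤ 1 := by
      rw [hy]
      exact ENNReal.toReal_le_of_le_ofReal one_pos.le (by simpa using hyle1)
    have hlog : 0 ≤ Real.log (1 / y) := Real.log_nonneg (by
      rw [le_div_iff₀ hy0]; linarith)
    set r := Real.sqrt (a * Real.log (1 / y)) with hrdef
    have hr : 0 ≤ r := Real.sqrt_nonneg _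
    have hr2 : r ^ 2 = a * Real.log (1 / y) := Real.sq_sqrt (by positivity)
    set T := {p : ℝ × ℝ | r ^ 2 ≤ p.1 ^ 2 + p.2 ^ 2} with hT
    have hTmeas : MeasurableSet T := measurableSet_tail r
    have hlogy : -r ^ 2 / a = Real.log y := by
      rw [hr2, one_div, Real.log_inv]
      field_simp
    have hTa : P2 a T = P2 a F := by
      rw [P2_tail a r ha hr, hlogy, Real.exp_log hy0, hy, ENNReal.ofReal_toReal hyfin]
    -- exchange argument
    set κ := ENNReal.ofReal ((a / b) * Real.exp (r ^ 2 * (1 / a - 1 / b))) with hκ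
    have hcoef : 0 ≤ 1 / a - 1 / b := by
      rw [sub_nonneg]
      exact one_div_le_one_div_of_le ha hab
    have hle1 : ∀ p ∈ F \ T, Lr a b p ≤ κ := by
      intro p hp
      have hs : p.1 ^ 2 + p.2 ^ 2 < r ^ 2 := by
        have := hp.2
        simp only [hT, mem_setOf_eq, not_le] at this
        exact this
      unfold Lr
      apply ENNReal.ofReal_le_ofReal
      apply mul_le_mul_of_nonneg_left _ (by positivity)
      apply Real.exp_le_exp.mpr
      exact mul_le_mul_of_nonneg_right hs.le hcoef
    have hge1 : ∀ p ∈ T \ F, κ ≤ Lr a b p := by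
      intro p hp
      have hs : r ^ 2 ≤ p.1 ^ 2 + p.2 ^ 2 := hp.1
      unfold Lr
      apply ENNReal.ofReal_le_ofReal
      apply mul_le_mul_of_nonneg_left _ (by positivity)
      apply Real.exp_le_exp.mpr
      exact mul_le_mul_of_nonneg_right hs hcoef
    have hdiff : P2 a (F \ T) = P2 a (T \ F) := by
      have h1 : P2 a (F ∩ T) + P2 a (F \ T) = P2 a F := measure_inter_add_diff F hTmeas
      have h2 : P2 a (T ∩ F) + P2 a (T \ F) = P2 a T := measure_inter_add_diff T hF
      rw [inter_comm] at h2
      have h3 : P2 a (F ∩ T) + P2 a (F \ T) = P2 a (F ∩ T) + P2 a (T \ F) := by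
        rw [h1, h2, hTa]
      exact (ENNReal.add_right_inj (measure_ne_top _ _)).mp h3
    have hbF : P2 b F = ∫⁻ p in F, Lr a b p ∂(P2 a) := by
      rw [P2_ratio a b ha hab, withDensity_apply _ hF]
    have hbT : P2 b T = ∫⁻ p in T, Lr a b p ∂(P2 a) := by
      rw [P2_ratio a b ha hab, withDensity_apply _ hTmeas]
    have hsplitF : ∫⁻ p in F, Lr a b p ∂(P2 a)
        = ∫⁻ p in F ∩ T, Lr a b p ∂(P2 a) + ∫⁻ p in F \ T, Lr a b p ∂(P2 a) := by
      conv_lhs => rw [← inter_union_diff F T]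
      rw [lintegral_union (hF.diff hTmeas) (disjoint_sdiff_self_right.mono_left inter_subset_right)]
    have hsplitT : ∫⁻ p in T, Lr a b p ∂(P2 a)
        = ∫⁻ p in F ∩ T, Lr a b p ∂(P2 a) + ∫⁻ p in T \ F, Lr a b p ∂(P2 a) := by
      conv_lhs => rw [← inter_union_diff T F]
      rw [lintegral_union (hTmeas.diff hF) (disjoint_sdiff_self_right.mono_left inter_subset_right),
        inter_comm T F]
    have hstep : P2 b F ≤ P2 b T := by
      rw [hbF, hbT, hsplitF, hsplitT]
      apply add_le_add_right
      calc ∫⁻ p in F \ T, Lr a b p ∂(P2 a)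
          ≤ ∫⁻ _ in F \ T, κ ∂(P2 a) :=
            setLIntegral_mono measurable_const (fun p hp => hle1 p hp)
        _ = κ * P2 a (F \ T) := by rw [setLIntegral_const]
        _ = κ * P2 a (T \ F) := by rw [hdiff]
        _ = ∫⁻ _ in T \ F, κ ∂(P2 a) := by rw [setLIntegral_const]
        _ ≤ ∫⁻ p in T \ F, Lr a b p ∂(P2 a) :=
            setLIntegral_mono (measurable_Lr a b) (fun p hp => hge1 p hp)
    refine hstep.trans ?_
    rw [P2_tail b r hb hr]
    have hexp : Real.exp (-r ^ 2 / b) = y ^ (a / b) := by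
      rw [Real.rpow_def_of_pos hy0]
      congr 1
      rw [hr2, one_div, Real.log_inv]
      field_simp
    rw [hexp, ← ENNReal.ofReal_rpow_of_pos hy0, ENNReal.ofReal_toReal hyfin]

lemma term_le (x w β : ℝ) (hx0 : 0 ≤ x) (hw : 0 ≤ w) (hβ0 : 0 < β)
    (hxw : x ≤ w ^ β) :
    x * Real.log (x / w) ≤ (1 / β - 1) * (-(x * Real.log x)) := by
  rcases eq_or_lt_of_le hx0 with hx | hx
  · simp [← hx]
  · have hw0 : 0 < w := by
      rcases eq_or_lt_of_le hw with hw' | hw'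
      · exfalso
        rw [← hw', Real.zero_rpow hβ0.ne'] at hxw
        linarith
      · exact hw'
    have hxpow : x ^ (1 / β) ≤ w := by
      have h := Real.rpow_le_rpow hx0 hxw (by positivity : (0:ℝ) ≤ 1 / β)
      rwa [← Real.rpow_mul hw, mul_one_div, div_self hβ0.ne', Real.rpow_one] at h
    have hlogw : Real.log (x ^ (1 / β)) ≤ Real.log w := Real.log_le_log (by positivity) hxpow
    rw [Real.log_rpow hx] at hlogw
    have hlogdiv : Real.log (x / w) = Real.log x - Real.log w :=
      Real.log_div hx.ne' hw0.ne'
    have : Real.log (x / w) ≤ (1 - 1 / β) * Real.log x := by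
      rw [hlogdiv]
      nlinarith
    calc x * Real.log (x / w) ≤ x * ((1 - 1 / β) * Real.log x) :=
          mul_le_mul_of_nonneg_left this hx0
      _ = (1 / β - 1) * (-(x * Real.log x)) := by ring

lemma bre_le (p q β : ℝ) (hp0 : 0 ≤ p) (hp1 : p ≤ 1) (hq0 : 0 ≤ q) (hq1 : q ≤ 1)
    (hβ0 : 0 < β) (hβ1 : β ≤ 1) (h1 : p ≤ q ^ β) (h2 : 1 - p ≤ (1 - q) ^ β) :
    bre p q ≤ ENNReal.ofReal ((1 / β - 1) * Real.log 2) := by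
  rw [bre]
  split_ifs with h
  · exfalso
    rcases h.1 with hq | hq
    · rw [hq, Real.zero_rpow hβ0.ne'] at h1
      exact h.2 (by linarith [le_antisymm h1 hp0, hq])
    · rw [hq, sub_self, Real.zero_rpow hβ0.ne'] at h2
      exact h.2 (by rw [hq]; linarith)
  · apply ENNReal.ofReal_le_ofReal
    have t1 := term_le p q β hp0 hq0 hβ0 h1
    have t2 := term_le (1 - p) (1 - q) β (by linarith) (by linarith) hβ0 h2
    have hge : 0 ≤ 1 / β - 1 := by
      have : 1 ≤ 1 / β := by
        rw [le_div_iff₀ hβ0]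
        linarith
      linarith
    calc p * Real.log (p / q) + (1 - p) * Real.log ((1 - p) / (1 - q))
        ≤ (1 / β - 1) * (-(p * Real.log p)) + (1 / β - 1) * (-((1 - p) * Real.log (1 - p))) :=
          add_le_add t1 t2
      _ = (1 / β - 1) * Real.binEntropy p := by
          rw [Real.binEntropy, Real.log_inv, Real.log_inv]
          ring
      _ ≤ (1 / β - 1) * Real.log 2 :=
          mul_le_mul_of_nonneg_left Real.binEntropy_le_log_two hge


/-- Noncoherent case of Theorem 1: quantizing the output of the noncoherent Rayleigh-fading
channel with any one-bit quantizer strictly reduces the capacity per unit-energy below the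
unquantized value `1/σ²`. Here `P_x = 𝒩_ℂ(0, |x|² + σ²)` is the output law given input `x`. -/
theorem noncoherent_capacity_per_unit_energy_lt (σ : ℝ) (hσ : 0 < σ) :
    (⨆ (ξ : ℂ) (_ : ξ ≠ 0) (D : Set ℂ) (_ : MeasurableSet D),
        bre ((cgauss 0 (‖ξ‖ ^ 2 + σ ^ 2)) D).toReal
            ((cgauss 0 (σ ^ 2)) D).toReal /
          ENNReal.ofReal (‖ξ‖ ^ 2)) <
      ENNReal.ofReal (1 / σ ^ 2) := by
  have hσ2 : 0 < σ ^ 2 := by positivity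
  have hlog2 : Real.log 2 < 1 := by
    have := Real.log_two_lt_d9
    linarith
  have hfinal : ENNReal.ofReal (Real.log 2 / σ ^ 2) < ENNReal.ofReal (1 / σ ^ 2) := by
    rw [ENNReal.ofReal_lt_ofReal_iff (by positivity)]
    rw [div_eq_mul_inv, div_eq_mul_inv]
    exact mul_lt_mul_of_pos_right hlog2 (by positivity)
  refine lt_of_le_of_lt ?_ hfinal
  refine iSup_le fun ξ => iSup_le fun hξ => iSup_le fun D => iSup_le fun hD => ?_
  have habs : ‖ξ‖ ≠ 0 := by
    simpa using hξ
  set s := ‖ξ‖ ^ 2 with hs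
  have hs0 : 0 < s := by positivity
  set w := s + σ ^ 2 with hw
  have hw0 : 0 < w := by positivity
  have hsw : σ ^ 2 ≤ w := by rw [hw]; linarith
  set F := Complex.measurableEquivRealProd.symm ⁻¹' D with hF
  have hFmeas : MeasurableSet F := Complex.measurableEquivRealProd.symm.measurable hD
  have hkey : ∀ v : ℝ, cgauss 0 v D = P2 v F := by
    intro v
    rw [cgauss]
    simp only [Complex.zero_re, Complex.zero_im]
    rw [MeasurableEquiv.map_apply]
    rfl
  have htoReal_le_one : ∀ x : ℝ≥0∞, x ≤ 1 → x.toReal ≤ 1 := fun x hx => by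
    simpa using ENNReal.toReal_mono ENNReal.one_ne_top hx
  set β := σ ^ 2 / w with hβ
  have hβ0 : 0 < β := by positivity
  have hβ1 : β ≤ 1 := by
    rw [hβ, div_le_one hw0]
    exact hsw
  -- real versions of the NP inequalities
  have hNPreal : ∀ G : Set (ℝ × ℝ), MeasurableSet G →
      (P2 w G).toReal ≤ (P2 (σ ^ 2) G).toReal ^ β := by
    intro G hG
    have h1 := P2_NP (σ ^ 2) w hσ2 hsw hG
    have hfin : (P2 (σ ^ 2) G) ^ (σ ^ 2 / w) ≠ ⊤ :=
      ENNReal.rpow_ne_top_of_nonneg (by positivity) (measure_ne_top _ _)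
    have := ENNReal.toReal_mono hfin h1
    rwa [← ENNReal.toReal_rpow] at this
  set pR := (P2 w F).toReal with hpR
  set qR := (P2 (σ ^ 2) F).toReal with hqR
  have hcompl : ∀ v : ℝ, (P2 v Fᶜ).toReal = 1 - (P2 v F).toReal := by
    intro v
    rw [prob_compl_eq_one_sub hFmeas,
      ENNReal.toReal_sub_of_le prob_le_one ENNReal.one_ne_top]
    simp
  have hr1 : pR ≤ qR ^ β := hNPreal F hFmeas
  have hr2 : 1 - pR ≤ (1 - qR) ^ β := by
    have := hNPreal Fᶜ hFmeas.compl
    rwa [hcompl w, hcompl (σ ^ 2)] at this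
  have hbre : bre pR qR ≤ ENNReal.ofReal ((1 / β - 1) * Real.log 2) :=
    bre_le pR qR β ENNReal.toReal_nonneg (htoReal_le_one _ prob_le_one)
      ENNReal.toReal_nonneg (htoReal_le_one _ prob_le_one) hβ0 hβ1 hr1 hr2
  have hβval : 1 / β - 1 = s / σ ^ 2 := by
    rw [hβ]
    field_simp
    rw [hw]
    ring
  rw [hβval] at hbre
  have hgoal : bre ((cgauss 0 (‖ξ‖ ^ 2 + σ ^ 2)) D).toReal
      ((cgauss 0 (σ ^ 2)) D).toReal / ENNReal.ofReal (‖ξ‖ ^ 2)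
      = bre pR qR / ENNReal.ofReal s := by
    rw [← hs, ← hw, hkey w, hkey (σ ^ 2)]
  rw [hgoal]
  calc bre pR qR / ENNReal.ofReal s
      ≤ ENNReal.ofReal (s / σ ^ 2 * Real.log 2) / ENNReal.ofReal s :=
        ENNReal.div_le_div_right hbre _
    _ = ENNReal.ofReal (s / σ ^ 2 * Real.log 2 / s) := (ENNReal.ofReal_div_of_pos hs0).symm
    _ = ENNReal.ofReal (Real.log 2 / σ ^ 2) := by
        congr 1
        field_simp
end

section
/- Optimality of radial quantizers in the noncoherent case (Neyman–Pearson step): Let σ > 0 and for x ∈ ℂ let P_x = 𝒩_ℂ(0, |x|² + σ²). For every ξ ∈ ℂ \ {0} and every Borel set D ⊆ ℝ² with 0 < P_ξ(D) < 1, there exists T > 0 such that d( exp(−T²/(|ξ|² + σ²)) ‖ exp(−T²/σ²) ) ≥ d( P_ξ(D) ‖ P_0(D) ). Consequently, for every ξ ≠ 0, the supremum over Borel D of d(P_ξ(D)‖P_0(D)) equals the supremum over radial regions D = {y : |y| ≥ T}, T > 0. -/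
open MeasureTheory ProbabilityTheory Complex
open scoped ENNReal NNReal

open Set Filter
open scoped Real Topology

noncomputable def gc (v : ℝ) (y : ℂ) : ℝ≥0∞ :=
  ENNReal.ofReal ((Real.pi * v)⁻¹ * Real.exp (-‖y‖ ^ 2 / v))

lemma gc_measurable (v : ℝ) : Measurable (gc v) := by
  apply ENNReal.measurable_ofReal.comp
  exact (Continuous.mul continuous_const
    ((Real.continuous_exp.comp
      ((continuous_pow 2 |>.comp continuous_norm).neg.div_const v)))).measurable

lemma gc_pos {v : ℝ} (hv : 0 < v) (y : ℂ) : 0 < gc v y := by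
  apply ENNReal.ofReal_pos.2
  positivity

instance cgauss_prob (m : ℂ) (v : ℝ) : IsProbabilityMeasure (cgauss m v) := by
  unfold cgauss
  exact Measure.isProbabilityMeasure_map
    (Complex.measurableEquivRealProd.symm.measurable.aemeasurable)

lemma map_symm_withDensity {α β : Type*} [MeasurableSpace α] [MeasurableSpace β]
    (e : α ≃ᵐ β) (ν : Measure β) {F : β → ℝ≥0∞} (hF : Measurable F) :
    Measure.map e.symm (ν.withDensity F) = (Measure.map e.symm ν).withDensity (F ∘ e) := by
  ext s hs
  rw [Measure.map_apply e.symm.measurable hs, withDensity_apply _ (e.symm.measurable hs),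
    withDensity_apply _ hs,
    MeasureTheory.setLIntegral_map hs (hF.comp e.measurable) e.symm.measurable]
  refine setLIntegral_congr_fun (e.symm.measurable hs) ?_
  intro x hx
  simp

lemma cgauss_eq {v : ℝ} (hv : 0 < v) : cgauss 0 v = volume.withDensity (gc v) := by
  set w : ℝ≥0 := (v / 2).toNNReal with hw
  have hwv : (w : ℝ) = v / 2 := Real.coe_toNNReal _ (by linarith)
  have hw0 : w ≠ 0 := by
    intro h
    rw [h] at hwv
    simp at hwv
    linarith
  have hmeas : Measurable fun p : ℝ × ℝ => gaussianPDF 0 w p.1 * gaussianPDF 0 w p.2 :=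
    ((measurable_gaussianPDF 0 w).comp measurable_fst).mul
      ((measurable_gaussianPDF 0 w).comp measurable_snd)
  have hprod : (gaussianReal 0 w).prod (gaussianReal 0 w)
      = ((volume : Measure ℝ).prod volume).withDensity
        (fun p => gaussianPDF 0 w p.1 * gaussianPDF 0 w p.2) := by
    refine Measure.prod_eq fun s t hs ht => ?_
    rw [withDensity_apply _ (hs.prod ht), ← Measure.prod_restrict,
      lintegral_prod_mul ((measurable_gaussianPDF 0 w).aemeasurable)
        ((measurable_gaussianPDF 0 w).aemeasurable),
      gaussianReal_of_var_ne_zero _ hw0, withDensity_apply _ hs, withDensity_apply _ ht]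
  have : cgauss 0 v = Measure.map Complex.measurableEquivRealProd.symm
      ((gaussianReal 0 w).prod (gaussianReal 0 w)) := by
    unfold cgauss
    simp [hw]
  rw [this, hprod, map_symm_withDensity _ _ hmeas,
    ← Measure.volume_eq_prod,
    (Complex.volume_preserving_equiv_real_prod.symm _).map_eq]
  congr 1
  funext y
  simp only [Function.comp_apply, Complex.measurableEquivRealProd_apply, gaussianPDF]
  rw [← ENNReal.ofReal_mul (gaussianPDFReal_nonneg _ _ _)]
  unfold gc
  congr 1
  unfold gaussianPDFReal
  have h2w : 2 * (w : ℝ) = v := by rw [hwv]; ring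
  have hpiw : 2 * Real.pi * (w : ℝ) = Real.pi * v := by rw [hwv]; ring
  have hsq : ‖y‖ ^ 2 = y.re ^ 2 + y.im ^ 2 := by
    rw [Complex.sq_norm, Complex.normSq_apply]; ring
  rw [hpiw, hsq]
  have hpv : 0 < Real.pi * v := by positivity
  rw [mul_mul_mul_comm, ← Real.exp_add]
  have hss : (Real.sqrt (Real.pi * v))⁻¹ * (Real.sqrt (Real.pi * v))⁻¹ = (Real.pi * v)⁻¹ := by
    rw [← mul_inv, Real.mul_self_sqrt hpv.le]
  rw [hss]
  congr 1
  rw [h2w]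
  ring

lemma radial_1d {v : ℝ} (hv : 0 < v) (T : ℝ) :
    ∫ r in Ioi T, r * Real.exp (-r ^ 2 / v) = v / 2 * Real.exp (-T ^ 2 / v) := by
  have hderiv : ∀ x ∈ Ici T, HasDerivAt (fun r => -(v / 2) * Real.exp (-r ^ 2 / v))
      (x * Real.exp (-x ^ 2 / v)) x := by
    intro x hx
    have h1 : HasDerivAt (fun r : ℝ => -r ^ 2 / v) (-2 * x / v) x := by
      have := ((hasDerivAt_pow 2 x).neg).div_const v
      refine this.congr_deriv ?_
      ring
    have := ((Real.hasDerivAt_exp _).comp x h1).const_mul (-(v / 2))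
    refine this.congr_deriv ?_
    field_simp
  have htend : Tendsto (fun r => -(v / 2) * Real.exp (-r ^ 2 / v)) atTop (𝓝 0) := by
    rw [show (0 : ℝ) = -(v / 2) * 0 by ring]
    apply Tendsto.const_mul
    apply Real.tendsto_exp_atBot.comp
    apply Tendsto.atBot_div_const hv
    exact tendsto_neg_atBot_iff.2 (tendsto_pow_atTop (by norm_num))
  have hint : IntegrableOn (fun x => x * Real.exp (-x ^ 2 / v)) (Ioi T) := by
    have : IntegrableOn (fun x => x * Real.exp (-(1/v) * x ^ 2)) (Ioi T) :=
      (integrable_mul_exp_neg_mul_sq (by positivity)).integrableOn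
    refine this.congr_fun (fun x _ => by ring_nf) measurableSet_Ioi
  have := integral_Ioi_of_hasDerivAt_of_tendsto' hderiv hint htend
  rw [this]
  ring

lemma integrable_gauss2 {v : ℝ} (hv : 0 < v) :
    Integrable (fun y : ℂ => (Real.pi * v)⁻¹ * Real.exp (-‖y‖ ^ 2 / v)) := by
  have hb : (0:ℝ) < ((v:ℂ)⁻¹).re := by
    simp only [← Complex.ofReal_inv, Complex.ofReal_re]
    positivity
  have h := (GaussianFourier.integrable_cexp_neg_mul_sq_norm_add (V := ℂ)
    (b := ((v:ℂ))⁻¹) hb 0 0).norm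
  have heq : (fun y : ℂ => ‖cexp (-((v:ℂ))⁻¹ * (‖y‖:ℂ) ^ 2 + 0 * (inner ℝ (0:ℂ) y : ℝ))‖)
      = fun y : ℂ => Real.exp (-‖y‖ ^ 2 / v) := by
    funext y
    rw [Complex.norm_exp]
    congr 1
    simp only [zero_mul, add_zero, ← Complex.ofReal_inv, ← Complex.ofReal_pow,
      ← Complex.ofReal_mul, ← Complex.ofReal_neg, Complex.ofReal_re]
    field_simp
  rw [heq] at h
  exact h.const_mul _

lemma gc_radial {v : ℝ} (hv : 0 < v) {T : ℝ} (hT : 0 < T) :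
    (volume.withDensity (gc v)) {y : ℂ | T ≤ ‖y‖}
      = ENNReal.ofReal (Real.exp (-T ^ 2 / v)) := by
  have hA : MeasurableSet {y : ℂ | T ≤ ‖y‖} :=
    continuous_norm.measurable measurableSet_Ici
  set f : ℝ → ℝ := fun r => (Real.pi * v)⁻¹ * Real.exp (-r ^ 2 / v) with hf
  set ftil : ℝ → ℝ := (Ici T).indicator f with hftil
  have key : ∀ y : ℂ, ({y : ℂ | T ≤ ‖y‖}).indicator
      (fun y => (Real.pi * v)⁻¹ * Real.exp (-‖y‖ ^ 2 / v)) y = ftil ‖y‖ := by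
    intro y
    simp only [hftil, indicator, mem_setOf_eq, mem_Ici, hf]
  rw [withDensity_apply _ hA, ← lintegral_indicator hA]
  have : ∀ y : ℂ, ({y : ℂ | T ≤ ‖y‖}).indicator (gc v) y
      = ENNReal.ofReal (ftil ‖y‖) := by
    intro y
    rw [← key y]
    unfold gc
    by_cases h : y ∈ {y : ℂ | T ≤ ‖y‖} <;> simp [indicator, h]
  simp_rw [this]
  have hint : Integrable (fun y : ℂ => ftil ‖y‖) := by
    have : (fun y : ℂ => ftil ‖y‖)
        = ({y : ℂ | T ≤ ‖y‖}).indicator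
          (fun y => (Real.pi * v)⁻¹ * Real.exp (-‖y‖ ^ 2 / v)) := by
      funext y; rw [key y]
    rw [this]
    exact (integrable_gauss2 hv).indicator hA
  rw [← ofReal_integral_eq_lintegral_ofReal hint ?nn]
  case nn =>
    refine Filter.Eventually.of_forall fun y => ?_
    refine indicator_nonneg (fun r _ => ?_) _
    positivity
  congr 1
  rw [integral_fun_norm_addHaar (volume : Measure ℂ) ftil]
  rw [Complex.finrank_real_complex, measureReal_def, Complex.volume_ball]
  rw [show (ENNReal.ofReal 1 ^ 2 * (NNReal.pi : ℝ≥0∞)).toReal = Real.pi by simp]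
  have : ∫ r in Ioi (0:ℝ), r ^ (2 - 1) • ftil r = ∫ r in Ioi T, r * f r := by
    rw [show (2 - 1 : ℕ) = 1 by norm_num]
    simp_rw [pow_one, smul_eq_mul]
    have : ∀ r : ℝ, r * ftil r = (Ici T).indicator (fun r => r * f r) r := by
      intro r
      by_cases h : r ∈ Ici T <;> simp [hftil, indicator, h]
    simp_rw [this]
    have hIT : Ioi (0:ℝ) ∩ Ici T = Ici T :=
      inter_eq_self_of_subset_right fun x hx => lt_of_lt_of_le hT hx
    rw [setIntegral_indicator measurableSet_Ici, hIT, integral_Ici_eq_integral_Ioi]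
  rw [this]
  have h1d : ∫ r in Ioi T, r * f r = (Real.pi * v)⁻¹ * (v / 2 * Real.exp (-T ^ 2 / v)) := by
    simp_rw [hf, mul_comm ((Real.pi * v)⁻¹) _, ← mul_assoc]
    rw [integral_mul_const, radial_1d hv T]
  rw [h1d]
  simp only [nsmul_eq_mul, smul_eq_mul]
  have hpi := Real.pi_pos
  field_simp
  ring

lemma radial_meas (T : ℝ) : MeasurableSet {y : ℂ | T ≤ ‖y‖} :=
  continuous_norm.measurable measurableSet_Ici

lemma np {v₀ v₁ : ℝ} (h0 : 0 < v₀) (h01 : v₀ < v₁) {T : ℝ} (hT : 0 < T) {D : Set ℂ}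
    (hD : MeasurableSet D)
    (hq : (volume.withDensity (gc v₀)) D
        ≤ (volume.withDensity (gc v₀)) {y : ℂ | T ≤ ‖y‖}) :
    (volume.withDensity (gc v₁)) D
      ≤ (volume.withDensity (gc v₁)) {y : ℂ | T ≤ ‖y‖} := by
  have h1 : 0 < v₁ := h0.trans h01
  set A := {y : ℂ | T ≤ ‖y‖} with hAdef
  have hA : MeasurableSet A := radial_meas T
  set μ₀ := volume.withDensity (gc v₀) with hμ₀
  set μ₁ := volume.withDensity (gc v₁) with hμ₁
  set t : ℝ := Real.exp (T ^ 2 * (1 / v₀ - 1 / v₁)) * (v₀ / v₁) with ht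
  have ht0 : 0 ≤ t := by positivity
  have hdpos : 0 < 1 / v₀ - 1 / v₁ := by
    have := one_div_lt_one_div_of_lt h0 h01
    linarith
  have keyA : ∀ s : ℝ, T ^ 2 ≤ s →
      t * ((Real.pi * v₀)⁻¹ * Real.exp (-s / v₀)) ≤ (Real.pi * v₁)⁻¹ * Real.exp (-s / v₁) := by
    intro s hs
    have hfac : t * ((Real.pi * v₀)⁻¹ * Real.exp (-s / v₀))
        = (Real.pi * v₁)⁻¹ * Real.exp (T ^ 2 * (1 / v₀ - 1 / v₁) + -s / v₀) := by
      rw [Real.exp_add, ht]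
      have hpi := Real.pi_pos
      field_simp
    rw [hfac]
    have hexp : T ^ 2 * (1 / v₀ - 1 / v₁) + -s / v₀ ≤ -s / v₁ := by
      have h2 : (T ^ 2 - s) * (1 / v₀ - 1 / v₁) ≤ 0 :=
        mul_nonpos_of_nonpos_of_nonneg (by linarith) hdpos.le
      have e1 : -s / v₀ = -s * (1 / v₀) := by ring
      have e2 : -s / v₁ = -s * (1 / v₁) := by ring
      rw [e1, e2]
      nlinarith
    exact mul_le_mul_of_nonneg_left (Real.exp_le_exp.2 hexp) (by positivity)
  have keyAc : ∀ s : ℝ, s ≤ T ^ 2 →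
      (Real.pi * v₁)⁻¹ * Real.exp (-s / v₁) ≤ t * ((Real.pi * v₀)⁻¹ * Real.exp (-s / v₀)) := by
    intro s hs
    have hfac : t * ((Real.pi * v₀)⁻¹ * Real.exp (-s / v₀))
        = (Real.pi * v₁)⁻¹ * Real.exp (T ^ 2 * (1 / v₀ - 1 / v₁) + -s / v₀) := by
      rw [Real.exp_add, ht]
      have hpi := Real.pi_pos
      field_simp
    rw [hfac]
    have hexp : -s / v₁ ≤ T ^ 2 * (1 / v₀ - 1 / v₁) + -s / v₀ := by
      have h2 : 0 ≤ (T ^ 2 - s) * (1 / v₀ - 1 / v₁) :=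
        mul_nonneg (by linarith) hdpos.le
      have e1 : -s / v₀ = -s * (1 / v₀) := by ring
      have e2 : -s / v₁ = -s * (1 / v₁) := by ring
      rw [e1, e2]
      nlinarith
    exact mul_le_mul_of_nonneg_left (Real.exp_le_exp.2 hexp) (by positivity)
  have hgA : ∀ y ∈ A, ENNReal.ofReal t * gc v₀ y ≤ gc v₁ y := by
    intro y hy
    have hs : T ^ 2 ≤ ‖y‖ ^ 2 := pow_le_pow_left₀ hT.le hy 2
    unfold gc
    rw [← ENNReal.ofReal_mul ht0]
    exact ENNReal.ofReal_le_ofReal (keyA _ hs)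
  have hgAc : ∀ y, y ∉ A → gc v₁ y ≤ ENNReal.ofReal t * gc v₀ y := by
    intro y hy
    have hy' : ‖y‖ < T := not_le.1 hy
    have hs : ‖y‖ ^ 2 ≤ T ^ 2 := pow_le_pow_left₀ (norm_nonneg y) hy'.le 2
    unfold gc
    rw [← ENNReal.ofReal_mul ht0]
    exact ENNReal.ofReal_le_ofReal (keyAc _ hs)
  -- measure comparison on subsets of A and Aᶜ
  have hle1 : μ₁ (D \ A) ≤ ENNReal.ofReal t * μ₀ (D \ A) := by
    rw [hμ₀, hμ₁, withDensity_apply _ (hD.diff hA), withDensity_apply _ (hD.diff hA),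
      ← lintegral_const_mul _ (gc_measurable v₀)]
    refine setLIntegral_mono ((gc_measurable v₀).const_mul _) fun y hy => hgAc y hy.2
  have hle2 : ENNReal.ofReal t * μ₀ (A \ D) ≤ μ₁ (A \ D) := by
    rw [hμ₀, hμ₁, withDensity_apply _ (hA.diff hD), withDensity_apply _ (hA.diff hD),
      ← lintegral_const_mul _ (gc_measurable v₀)]
    refine setLIntegral_mono (gc_measurable v₁) fun y hy => hgA y hy.1
  have hfin : μ₀ (A ∩ D) ≠ ⊤ := by
    rw [hμ₀, ← cgauss_eq h0]
    exact measure_ne_top _ _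
  have h₀diff : μ₀ (D \ A) ≤ μ₀ (A \ D) := by
    have e1 : μ₀ (A ∩ D) + μ₀ (D \ A) = μ₀ D := by
      rw [Set.inter_comm]
      exact measure_inter_add_diff D hA
    have e2 : μ₀ (A ∩ D) + μ₀ (A \ D) = μ₀ A := by
      exact measure_inter_add_diff A hD
    rw [← e1, ← e2] at hq
    exact (ENNReal.add_le_add_iff_left hfin).1 hq
  have hchain : μ₁ (D \ A) ≤ μ₁ (A \ D) :=
    hle1.trans ((mul_le_mul_right h₀diff _).trans hle2)
  have e1 : μ₁ (A ∩ D) + μ₁ (D \ A) = μ₁ D := by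
    rw [Set.inter_comm]
    exact measure_inter_add_diff D hA
  have e2 : μ₁ (A ∩ D) + μ₁ (A \ D) = μ₁ A := by
    exact measure_inter_add_diff A hD
  rw [← e1, ← e2]
  exact add_le_add_right hchain _

lemma bre_flip {p q : ℝ} (hq0 : q ≠ 0) (hq1 : q ≠ 1) :
    bre p q = bre (1 - p) (1 - q) := by
  have h1 : ¬((q = 0 ∨ q = 1) ∧ p ≠ q) := by
    rintro ⟨h, -⟩
    rcases h with h | h
    exacts [hq0 h, hq1 h]
  have h2 : ¬((1 - q = 0 ∨ 1 - q = 1) ∧ 1 - p ≠ 1 - q) := by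
    rintro ⟨h, -⟩
    rcases h with h | h
    · exact hq1 (by linarith)
    · exact hq0 (by linarith)
  rw [bre, bre, if_neg h1, if_neg h2]
  congr 1
  simp only [sub_sub_cancel]
  ring

lemma bre_mono {q p₁ p₂ : ℝ} (hq0 : 0 < q) (hq1 : q < 1) (h1 : q ≤ p₁) (h2 : p₁ ≤ p₂)
    (hp2 : p₂ < 1) : bre p₁ q ≤ bre p₂ q := by
  have hcond : ¬(q = 0 ∨ q = 1) := by
    rintro (h | h)
    · exact hq0.ne' h
    · exact hq1.ne h
  rw [bre, bre, if_neg (fun h => hcond h.1), if_neg (fun h => hcond h.1)]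
  apply ENNReal.ofReal_le_ofReal
  set g : ℝ → ℝ := fun p => p * Real.log p + (1 - p) * Real.log (1 - p)
    - p * Real.log q - (1 - p) * Real.log (1 - q) with hg
  have hder : ∀ x : ℝ, 0 < x → x < 1 →
      HasDerivAt g (Real.log x - Real.log q - Real.log (1 - x) + Real.log (1 - q)) x := by
    intro x hx0 hx1
    have hu : HasDerivAt (fun p : ℝ => 1 - p) (-1) x := (hasDerivAt_id x).const_sub 1
    have hA : HasDerivAt (fun p : ℝ => p * Real.log p) (Real.log x + 1) x :=
      Real.hasDerivAt_mul_log hx0.ne'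
    have hB : HasDerivAt (fun p : ℝ => (1 - p) * Real.log (1 - p))
        (-(Real.log (1 - x) + 1)) x := by
      have := (Real.hasDerivAt_mul_log (by linarith : (1:ℝ) - x ≠ 0)).comp x hu
      refine this.congr_deriv ?_
      ring
    have hC : HasDerivAt (fun p : ℝ => p * Real.log q) (Real.log q) x := by
      simpa using (hasDerivAt_id x).mul_const (Real.log q)
    have hD : HasDerivAt (fun p : ℝ => (1 - p) * Real.log (1 - q)) (-Real.log (1 - q)) x := by
      simpa using hu.mul_const (Real.log (1 - q))
    have := ((hA.add hB).sub hC).sub hD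
    refine this.congr_deriv ?_
    ring
  have hmono : MonotoneOn g (Icc q p₂) := by
    apply monotoneOn_of_deriv_nonneg (convex_Icc q p₂)
    · intro x hx
      exact (hder x (lt_of_lt_of_le hq0 hx.1)
        (lt_of_le_of_lt hx.2 hp2)).continuousAt.continuousWithinAt
    · intro x hx
      rw [interior_Icc] at hx
      exact (hder x (hq0.trans hx.1) (hx.2.trans hp2)).differentiableAt.differentiableWithinAt
    · intro x hx
      rw [interior_Icc] at hx
      obtain ⟨hxq, hxp⟩ := hx
      rw [(hder x (hq0.trans hxq) (hxp.trans hp2)).deriv]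
      have l1 : Real.log q ≤ Real.log x := Real.log_le_log hq0 hxq.le
      have l2 : Real.log (1 - x) ≤ Real.log (1 - q) :=
        Real.log_le_log (by nlinarith) (by linarith)
      linarith
  have key := hmono ⟨h1, h2⟩ ⟨h1.trans h2, le_refl p₂⟩ h2
  have conv : ∀ p : ℝ, 0 < p → p < 1 →
      p * Real.log (p / q) + (1 - p) * Real.log ((1 - p) / (1 - q)) = g p := by
    intro p hp0 hp1
    rw [Real.log_div hp0.ne' hq0.ne', Real.log_div (by linarith) (by linarith)]
    ring
  rw [conv p₁ (hq0.trans_le h1) (lt_of_le_of_lt h2 hp2),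
    conv p₂ (hq0.trans_le (h1.trans h2)) hp2]
  exact key

/-- Optimality of radial quantizers in the noncoherent case (Neyman–Pearson step):
every one-bit quantization region is dominated, in relative entropy, by a radial one, and
hence the supremum over all Borel regions of `d(P_ξ(D)‖P_0(D))` equals the supremum over
radial regions `{y : |y| ≥ T}`. Recall `P_x({y : |y| ≥ T}) = exp(−T²/(|x|² + σ²))`. -/
theorem radial_quantizers_optimal_noncoherent (σ : ℝ) (hσ : 0 < σ) (ξ : ℂ) (hξ : ξ ≠ 0) :
    (∀ D : Set ℂ, MeasurableSet D →
        0 < (cgauss 0 (‖ξ‖ ^ 2 + σ ^ 2)) D →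
        (cgauss 0 (‖ξ‖ ^ 2 + σ ^ 2)) D < 1 →
        ∃ T : ℝ, 0 < T ∧
          bre ((cgauss 0 (‖ξ‖ ^ 2 + σ ^ 2)) D).toReal
              ((cgauss 0 (σ ^ 2)) D).toReal ≤
            bre (Real.exp (-T ^ 2 / (‖ξ‖ ^ 2 + σ ^ 2)))
              (Real.exp (-T ^ 2 / σ ^ 2))) ∧
      (⨆ (D : Set ℂ) (_ : MeasurableSet D),
          bre ((cgauss 0 (‖ξ‖ ^ 2 + σ ^ 2)) D).toReal
            ((cgauss 0 (σ ^ 2)) D).toReal) =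
        ⨆ (T : ℝ) (_ : 0 < T),
          bre ((cgauss 0 (‖ξ‖ ^ 2 + σ ^ 2)) {y : ℂ | T ≤ ‖y‖}).toReal
            ((cgauss 0 (σ ^ 2)) {y : ℂ | T ≤ ‖y‖}).toReal := by
  set v₀ : ℝ := σ ^ 2 with hv₀def
  set v₁ : ℝ := ‖ξ‖ ^ 2 + σ ^ 2 with hv₁def
  have h0 : 0 < v₀ := by positivity
  have habs : 0 < ‖ξ‖ := norm_pos_iff.2 hξ
  have h01 : v₀ < v₁ := by
    rw [hv₀def, hv₁def]
    nlinarith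
  have h1 : 0 < v₁ := h0.trans h01
  have hzero : ∀ {v v' : ℝ}, 0 < v → 0 < v' → ∀ {D : Set ℂ}, MeasurableSet D →
      cgauss 0 v D = 0 → cgauss 0 v' D = 0 := by
    intro v v' hv hv' D hD h
    rw [cgauss_eq hv, withDensity_apply_eq_zero (gc_measurable v)] at h
    rw [cgauss_eq hv', withDensity_apply_eq_zero (gc_measurable v')]
    have huniv : ∀ u : ℝ, 0 < u → {x : ℂ | gc u x ≠ 0} = univ := fun u hu =>
      eq_univ_of_forall fun y => (gc_pos hu y).ne'
    rw [huniv v hv, univ_inter] at h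
    rw [huniv v' hv', univ_inter]
    exact h
  have hrad : ∀ {v : ℝ}, 0 < v → ∀ {T : ℝ}, 0 < T →
      cgauss 0 v {y : ℂ | T ≤ ‖y‖} = ENNReal.ofReal (Real.exp (-T ^ 2 / v)) := by
    intro v hv T hT
    rw [cgauss_eq hv]
    exact gc_radial hv hT
  have npc : ∀ {T : ℝ}, 0 < T → ∀ {S : Set ℂ}, MeasurableSet S →
      cgauss 0 v₀ S ≤ cgauss 0 v₀ {y : ℂ | T ≤ ‖y‖} →
      cgauss 0 v₁ S ≤ cgauss 0 v₁ {y : ℂ | T ≤ ‖y‖} := by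
    intro T hT S hS hle
    rw [cgauss_eq h0] at hle
    rw [cgauss_eq h1]
    exact np h0 h01 hT hS hle
  have part1 : ∀ D : Set ℂ, MeasurableSet D → 0 < cgauss 0 v₁ D → cgauss 0 v₁ D < 1 →
      ∃ T : ℝ, 0 < T ∧ bre (cgauss 0 v₁ D).toReal (cgauss 0 v₀ D).toReal ≤
        bre (Real.exp (-T ^ 2 / v₁)) (Real.exp (-T ^ 2 / v₀)) := by
    intro D hD hpos hlt
    set p := (cgauss 0 v₁ D).toReal with hp
    set q := (cgauss 0 v₀ D).toReal with hq
    have hfin1 : cgauss 0 v₁ D ≠ ⊤ := measure_ne_top _ _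
    have hfin0 : cgauss 0 v₀ D ≠ ⊤ := measure_ne_top _ _
    have hp0 : 0 < p := ENNReal.toReal_pos hpos.ne' hfin1
    have hp1 : p < 1 := by
      have := (ENNReal.toReal_lt_toReal hfin1 (by norm_num : (1:ℝ≥0∞) ≠ ⊤)).2 hlt
      simpa using this
    have hq0 : 0 < q := by
      rcases eq_or_ne (cgauss 0 v₀ D) 0 with h | h
      · exact absurd (hzero h0 h1 hD h) hpos.ne'
      · exact ENNReal.toReal_pos h hfin0
    have hq1 : q < 1 := by
      by_contra hge
      push_neg at hge
      have hDone : cgauss 0 v₀ D = 1 := by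
        have hle' : cgauss 0 v₀ D ≤ 1 := prob_le_one
        have := (ENNReal.toReal_le_toReal (by norm_num : (1:ℝ≥0∞) ≠ ⊤) hfin0).2
        rcases lt_or_eq_of_le hle' with hlt' | heq
        · exfalso
          have := (ENNReal.toReal_lt_toReal hfin0 (by norm_num : (1:ℝ≥0∞) ≠ ⊤)).2 hlt'
          simp only [ENNReal.toReal_one] at this
          linarith
        · exact heq
      have hDc : cgauss 0 v₀ Dᶜ = 0 := (prob_compl_eq_zero_iff hD).2 hDone
      have h1c : cgauss 0 v₁ Dᶜ = 0 := hzero h0 h1 hD.compl hDc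
      have : cgauss 0 v₁ D = 1 := (prob_compl_eq_zero_iff hD).1 h1c
      exact absurd this hlt.ne
    have hD0eq : cgauss 0 v₀ D = ENNReal.ofReal q := (ENNReal.ofReal_toReal hfin0).symm
    rcases le_or_gt q p with hpq | hpq
    · -- match q
      have hlq : Real.log q < 0 := Real.log_neg hq0 hq1
      have harg : 0 < -v₀ * Real.log q := by nlinarith
      refine ⟨Real.sqrt (-v₀ * Real.log q), Real.sqrt_pos.2 harg, ?_⟩
      set T := Real.sqrt (-v₀ * Real.log q) with hTdef
      have hTpos : 0 < T := Real.sqrt_pos.2 harg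
      have hT2 : T ^ 2 = -v₀ * Real.log q := Real.sq_sqrt harg.le
      have hq_rad : Real.exp (-T ^ 2 / v₀) = q := by
        rw [hT2, show -(-v₀ * Real.log q) / v₀ = Real.log q by field_simp]
        exact Real.exp_log hq0
      have hμ₀A : cgauss 0 v₀ {y : ℂ | T ≤ ‖y‖} = ENNReal.ofReal q := by
        rw [hrad h0 hTpos, hq_rad]
      have hnp := npc hTpos hD (by rw [hμ₀A, ← hD0eq])
      have hprad : p ≤ Real.exp (-T ^ 2 / v₁) := by
        rw [hrad h1 hTpos] at hnp
        calc p ≤ (ENNReal.ofReal (Real.exp (-T ^ 2 / v₁))).toReal :=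
              ENNReal.toReal_mono ENNReal.ofReal_ne_top hnp
          _ = Real.exp (-T ^ 2 / v₁) := ENNReal.toReal_ofReal (Real.exp_nonneg _)
      have hprad1 : Real.exp (-T ^ 2 / v₁) < 1 := by
        rw [Real.exp_lt_one_iff]
        have : 0 < T ^ 2 := by positivity
        exact div_neg_of_neg_of_pos (by linarith) h1
      rw [hq_rad]
      exact bre_mono hq0 hq1 hpq hprad hprad1
    · -- match 1 - q on the complement
      have h1q0 : 0 < 1 - q := by linarith
      have h1q1 : 1 - q < 1 := by linarith
      have hlq : Real.log (1 - q) < 0 := Real.log_neg h1q0 h1q1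
      have harg : 0 < -v₀ * Real.log (1 - q) := by nlinarith
      refine ⟨Real.sqrt (-v₀ * Real.log (1 - q)), Real.sqrt_pos.2 harg, ?_⟩
      set T := Real.sqrt (-v₀ * Real.log (1 - q)) with hTdef
      have hTpos : 0 < T := Real.sqrt_pos.2 harg
      have hT2 : T ^ 2 = -v₀ * Real.log (1 - q) := Real.sq_sqrt harg.le
      have hq_rad : Real.exp (-T ^ 2 / v₀) = 1 - q := by
        rw [hT2, show -(-v₀ * Real.log (1 - q)) / v₀ = Real.log (1 - q) by field_simp]
        exact Real.exp_log h1q0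
      have hcompl0 : cgauss 0 v₀ Dᶜ = ENNReal.ofReal (1 - q) := by
        rw [prob_compl_eq_one_sub hD, hD0eq, ← ENNReal.ofReal_one,
          ← ENNReal.ofReal_sub _ hq0.le]
      have hμ₀A : cgauss 0 v₀ {y : ℂ | T ≤ ‖y‖} = ENNReal.ofReal (1 - q) := by
        rw [hrad h0 hTpos, hq_rad]
      have hnp := npc hTpos hD.compl (by rw [hμ₀A, ← hcompl0])
      have hcompl1 : (cgauss 0 v₁ Dᶜ).toReal = 1 - p := by
        rw [prob_compl_eq_one_sub hD,
          ENNReal.toReal_sub_of_le prob_le_one (by norm_num)]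
        simp [hp]
      have hprad : 1 - p ≤ Real.exp (-T ^ 2 / v₁) := by
        rw [hrad h1 hTpos] at hnp
        calc 1 - p = (cgauss 0 v₁ Dᶜ).toReal := hcompl1.symm
          _ ≤ (ENNReal.ofReal (Real.exp (-T ^ 2 / v₁))).toReal :=
              ENNReal.toReal_mono ENNReal.ofReal_ne_top hnp
          _ = Real.exp (-T ^ 2 / v₁) := ENNReal.toReal_ofReal (Real.exp_nonneg _)
      have hprad1 : Real.exp (-T ^ 2 / v₁) < 1 := by
        rw [Real.exp_lt_one_iff]
        have : 0 < T ^ 2 := by positivity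
        exact div_neg_of_neg_of_pos (by linarith) h1
      rw [hq_rad, bre_flip hq0.ne' hq1.ne]
      exact bre_mono h1q0 h1q1 (by linarith) hprad hprad1
  refine ⟨part1, ?_⟩
  apply le_antisymm
  · refine iSup₂_le fun D hD => ?_
    rcases eq_or_ne (cgauss 0 v₁ D) 0 with h | h
    · have h0' : cgauss 0 v₀ D = 0 := hzero h1 h0 hD h
      rw [h, h0']
      simp only [ENNReal.toReal_zero]
      rw [bre]
      norm_num
    · rcases eq_or_ne (cgauss 0 v₁ D) 1 with h1' | h1'
      · have h0' : cgauss 0 v₀ D = 1 := by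
          have hc : cgauss 0 v₁ Dᶜ = 0 := (prob_compl_eq_zero_iff hD).2 h1'
          exact (prob_compl_eq_zero_iff hD).1 (hzero h1 h0 hD.compl hc)
        rw [h1', h0']
        simp only [ENNReal.toReal_one]
        rw [bre]
        norm_num
      · have hpos : 0 < cgauss 0 v₁ D := pos_iff_ne_zero.2 h
        have hlt : cgauss 0 v₁ D < 1 := lt_of_le_of_ne prob_le_one h1'
        obtain ⟨T, hT, hle⟩ := part1 D hD hpos hlt
        have hterm : bre ((cgauss 0 v₁ {y : ℂ | T ≤ ‖y‖}).toReal)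
            ((cgauss 0 v₀ {y : ℂ | T ≤ ‖y‖}).toReal)
            = bre (Real.exp (-T ^ 2 / v₁)) (Real.exp (-T ^ 2 / v₀)) := by
          rw [hrad h1 hT, hrad h0 hT, ENNReal.toReal_ofReal (Real.exp_nonneg _),
            ENNReal.toReal_ofReal (Real.exp_nonneg _)]
        exact hle.trans (le_iSup₂_of_le T hT hterm.ge)
  · refine iSup₂_le fun T hT => ?_
    exact le_iSup₂_of_le {y : ℂ | T ≤ ‖y‖} (radial_meas T) le_rfl
end

section
/- Radial-quantizer relative-entropy bound (first form): For every σ > 0, every ξ ∈ ℂ, and every T > 0, d( exp(−T²/(|ξ|² + σ²)) ‖ exp(−T²/σ²) ) ≤ (T²/σ²)·exp(−T²/(|ξ|² + σ²)) + 1/e. -/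
open MeasureTheory ProbabilityTheory Complex
open scoped ENNReal NNReal

/-- Radial-quantizer relative-entropy bound (first form): for every `σ > 0`, `ξ ∈ ℂ` and
threshold `T > 0`,
`d(exp(−T²/(|ξ|²+σ²)) ‖ exp(−T²/σ²)) ≤ (T²/σ²)·exp(−T²/(|ξ|²+σ²)) + 1/e`. -/
theorem radial_bre_bound_first (σ : ℝ) (hσ : 0 < σ) (ξ : ℂ) (T : ℝ) (hT : 0 < T) :
    bre (Real.exp (-T ^ 2 / (‖ξ‖ ^ 2 + σ ^ 2))) (Real.exp (-T ^ 2 / σ ^ 2)) ≤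
      ENNReal.ofReal
        (T ^ 2 / σ ^ 2 * Real.exp (-T ^ 2 / (‖ξ‖ ^ 2 + σ ^ 2)) +
          1 / Real.exp 1) := by
  set s : ℝ := ‖ξ‖ ^ 2 + σ ^ 2 with hs
  have hσ2 : (0:ℝ) < σ ^ 2 := by positivity
  have hs0 : (0:ℝ) < s := by positivity
  have hσs : σ ^ 2 ≤ s := by
    have := sq_nonneg (‖ξ‖); linarith
  have hT2 : (0:ℝ) < T ^ 2 := by positivity
  set p : ℝ := Real.exp (-T ^ 2 / s)
  set q : ℝ := Real.exp (-T ^ 2 / σ ^ 2)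
  have hq0 : 0 < q := Real.exp_pos _
  have hq1 : q < 1 := by
    apply Real.exp_lt_one_iff.mpr
    have : (0:ℝ) < T ^ 2 / σ ^ 2 := by positivity
    rw [neg_div]; linarith
  have hp0 : 0 < p := Real.exp_pos _
  have hp1 : p < 1 := by
    apply Real.exp_lt_one_iff.mpr
    have : (0:ℝ) < T ^ 2 / s := by positivity
    rw [neg_div]; linarith
  have hqp : q ≤ p := by
    apply Real.exp_le_exp.mpr
    rw [div_le_div_iff₀ hσ2 hs0]
    nlinarith
  rw [bre, if_neg]
  · apply ENNReal.ofReal_le_ofReal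
    have h1 : p * Real.log (p / q) ≤ T ^ 2 / σ ^ 2 * p := by
      have hlog : Real.log (p / q) = T ^ 2 / σ ^ 2 - T ^ 2 / s := by
        rw [Real.log_div (ne_of_gt hp0) (ne_of_gt hq0), Real.log_exp, Real.log_exp]
        ring
      rw [hlog]
      have : 0 ≤ T ^ 2 / s := by positivity
      nlinarith
    have h2 : (1 - p) * Real.log ((1 - p) / (1 - q)) ≤ 0 := by
      apply mul_nonpos_of_nonneg_of_nonpos (by linarith)
      apply Real.log_nonpos
      · exact div_nonneg (by linarith) (by linarith)
      · rw [div_le_one (by linarith)]; linarith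
    have h3 : 0 ≤ 1 / Real.exp 1 := by positivity
    linarith
  · rintro ⟨hq, -⟩
    rcases hq with h | h
    · exact absurd h (ne_of_gt hq0)
    · exact absurd h (ne_of_lt hq1)
end

section
/- Radial-quantizer relative-entropy bound (second form): For every σ > 0, every ξ ∈ ℂ, and every T > 0, d( exp(−T²/(|ξ|² + σ²)) ‖ exp(−T²/σ²) ) ≤ |ξ|²/(e·σ²) + 2/e. (The bound follows since T² · exp(−T²/(|ξ|²+σ²)) is maximized over T at T² = |ξ|² + σ².) -/
open MeasureTheory ProbabilityTheory Complex
open scoped ENNReal NNReal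

/-- `x * exp (-x / c) ≤ c / e` for `c > 0`. -/
lemma aux_x_exp (c x : ℝ) (hc : 0 < c) (hx : 0 ≤ x) :
    x * Real.exp (-x / c) ≤ c / Real.exp 1 := by
  have key : (x / c) * Real.exp (-(x / c)) ≤ 1 / Real.exp 1 := by
    set t := x / c with ht
    have h1 : t ≤ Real.exp (t - 1) := by
      have := Real.add_one_le_exp (t - 1)
      linarith
    have h2 : Real.exp (t - 1) = Real.exp t / Real.exp 1 := by
      rw [Real.exp_sub]
    rw [h2] at h1
    have hexp : 0 < Real.exp (-t) := Real.exp_pos _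
    calc t * Real.exp (-t) ≤ (Real.exp t / Real.exp 1) * Real.exp (-t) := by
          apply mul_le_mul_of_nonneg_right h1 hexp.le
      _ = 1 / Real.exp 1 := by
          rw [div_mul_eq_mul_div, ← Real.exp_add]
          simp
  have : x * Real.exp (-x / c) = c * ((x / c) * Real.exp (-(x / c))) := by
    field_simp
  rw [this]
  calc c * ((x / c) * Real.exp (-(x / c))) ≤ c * (1 / Real.exp 1) := by
        apply mul_le_mul_of_nonneg_left key hc.le
    _ = c / Real.exp 1 := by ring

/-- Radial-quantizer relative-entropy bound (second form): for every `σ > 0`, `ξ ∈ ℂ` and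
threshold `T > 0`, `d(exp(−T²/(|ξ|²+σ²)) ‖ exp(−T²/σ²)) ≤ |ξ|²/(e·σ²) + 2/e`. -/
theorem radial_bre_bound_second (σ : ℝ) (hσ : 0 < σ) (ξ : ℂ) (T : ℝ) (hT : 0 < T) :
    bre (Real.exp (-T ^ 2 / (‖ξ‖ ^ 2 + σ ^ 2))) (Real.exp (-T ^ 2 / σ ^ 2)) ≤
      ENNReal.ofReal
        (‖ξ‖ ^ 2 / (Real.exp 1 * σ ^ 2) + 2 / Real.exp 1) := by
  set A := ‖ξ‖ ^ 2 with hAdef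
  have hA : 0 ≤ A := sq_nonneg _
  have hσ2 : 0 < σ ^ 2 := by positivity
  have hc : 0 < A + σ ^ 2 := by linarith
  have hT2 : 0 < T ^ 2 := by positivity
  set p := Real.exp (-T ^ 2 / (A + σ ^ 2)) with hpdef
  set q := Real.exp (-T ^ 2 / σ ^ 2) with hqdef
  have hp0 : 0 < p := Real.exp_pos _
  have hq0 : 0 < q := Real.exp_pos _
  have hp1 : p < 1 := by
    rw [hpdef]
    exact Real.exp_lt_one_iff.mpr (div_neg_of_neg_of_pos (by linarith) hc)
  have hq1 : q < 1 := by
    rw [hqdef]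
    exact Real.exp_lt_one_iff.mpr (div_neg_of_neg_of_pos (by linarith) hσ2)
  have hqp : q ≤ p := by
    apply Real.exp_le_exp.mpr
    rw [div_le_div_iff₀ hσ2 hc]
    nlinarith
  rw [bre, if_neg]
  · apply ENNReal.ofReal_le_ofReal
    have hlog : Real.log (p / q) = T ^ 2 * A / (σ ^ 2 * (A + σ ^ 2)) := by
      rw [Real.log_div hp0.ne' hq0.ne', hpdef, hqdef, Real.log_exp, Real.log_exp]
      field_simp
      ring
    have hterm1 : p * Real.log (p / q) ≤ A / (Real.exp 1 * σ ^ 2) := by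
      rw [hlog]
      have key := aux_x_exp (A + σ ^ 2) (T ^ 2) hc hT2.le
      calc p * (T ^ 2 * A / (σ ^ 2 * (A + σ ^ 2)))
          = (T ^ 2 * p) * (A / (σ ^ 2 * (A + σ ^ 2))) := by ring
        _ ≤ ((A + σ ^ 2) / Real.exp 1) * (A / (σ ^ 2 * (A + σ ^ 2))) := by
            apply mul_le_mul_of_nonneg_right
            · rw [hpdef]; linarith [aux_x_exp (A + σ ^ 2) (T ^ 2) hc hT2.le]
            · positivity
        _ = A / (Real.exp 1 * σ ^ 2) := by
            field_simp
    have hterm2 : (1 - p) * Real.log ((1 - p) / (1 - q)) ≤ 0 := by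
      apply mul_nonpos_of_nonneg_of_nonpos
      · linarith
      · apply Real.log_nonpos
        · apply div_nonneg <;> linarith
        · rw [div_le_one (by linarith)]
          linarith
    have h2e : (0:ℝ) ≤ 2 / Real.exp 1 := by positivity
    linarith
  · rintro ⟨hq01, _⟩
    rcases hq01 with h | h
    · exact hq0.ne' h
    · exact hq1.ne h
end

section
/- Asymptotic noncoherent bound: Let σ > 0 and for x ∈ ℂ let P_x = 𝒩_ℂ(0, |x|² + σ²). Then limsup over |ξ| → ∞ of ( sup over Borel D ⊆ ℝ² of d(P_ξ(D) ‖ P_0(D)) ) / |ξ|² ≤ 1/(e·σ²), which is strictly less than 1/σ². -/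
open MeasureTheory ProbabilityTheory Complex
open scoped ENNReal NNReal

open Real Set Filter
open scoped Topology

noncomputable def rpdf (v : ℝ) (p : ℝ × ℝ) : ℝ := (π * v)⁻¹ * rexp (-(p.1 ^ 2 + p.2 ^ 2) / v)

noncomputable def gmeas (v : ℝ) : Measure (ℝ × ℝ) :=
  (gaussianReal 0 (v / 2).toNNReal).prod (gaussianReal 0 (v / 2).toNNReal)

lemma gaussPDFReal_eq {v : ℝ} (hv : 0 < v) (x : ℝ) :
    gaussianPDFReal 0 (v / 2).toNNReal x = (Real.sqrt (π * v))⁻¹ * rexp (-(x ^ 2) / v) := by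
  have h2 : ((v / 2).toNNReal : ℝ) = v / 2 := Real.coe_toNNReal _ (by positivity)
  simp only [gaussianPDFReal, h2, sub_zero]
  rw [show 2 * π * (v / 2) = π * v by ring, show 2 * (v / 2) = v by ring]

lemma rpdf_eq_prod {v : ℝ} (hv : 0 < v) (p : ℝ × ℝ) :
    ENNReal.ofReal (rpdf v p) =
      gaussianPDF 0 (v / 2).toNNReal p.1 * gaussianPDF 0 (v / 2).toNNReal p.2 := by
  rw [gaussianPDF, gaussianPDF, gaussPDFReal_eq hv, gaussPDFReal_eq hv,
    ← ENNReal.ofReal_mul (by positivity)]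
  congr 1
  rw [rpdf]
  rw [show ((Real.sqrt (π * v))⁻¹ * rexp (-(p.1 ^ 2) / v)) * ((Real.sqrt (π * v))⁻¹ * rexp (-(p.2 ^ 2) / v))
      = ((Real.sqrt (π * v)) * (Real.sqrt (π * v)))⁻¹ * (rexp (-(p.1 ^ 2) / v) * rexp (-(p.2 ^ 2) / v)) by ring]
  rw [Real.mul_self_sqrt (by positivity), ← Real.exp_add]
  congr 1
  ring

lemma gmeas_eq_withDensity {v : ℝ} (hv : 0 < v) :
    gmeas v = (volume : Measure (ℝ × ℝ)).withDensity (fun p => ENNReal.ofReal (rpdf v p)) := by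
  have hv2 : (v / 2).toNNReal ≠ 0 := by
    simp [Real.toNNReal_eq_zero]; linarith
  rw [gmeas]
  refine (Measure.prod_eq fun s t hs ht => ?_)
  rw [withDensity_apply _ (hs.prod ht), Measure.volume_eq_prod, ← Measure.prod_restrict]
  calc ∫⁻ p, ENNReal.ofReal (rpdf v p) ∂((volume : Measure ℝ).restrict s).prod ((volume : Measure ℝ).restrict t)
      = ∫⁻ p, gaussianPDF 0 (v / 2).toNNReal p.1 * gaussianPDF 0 (v / 2).toNNReal p.2
          ∂((volume : Measure ℝ).restrict s).prod ((volume : Measure ℝ).restrict t) :=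
        lintegral_congr fun p => rpdf_eq_prod hv p
    _ = (∫⁻ x in s, gaussianPDF 0 (v / 2).toNNReal x) * ∫⁻ y in t, gaussianPDF 0 (v / 2).toNNReal y :=
        lintegral_prod_mul (measurable_gaussianPDF _ _).aemeasurable
          (measurable_gaussianPDF _ _).aemeasurable
    _ = gaussianReal 0 (v / 2).toNNReal s * gaussianReal 0 (v / 2).toNNReal t := by
        rw [gaussianReal_apply _ hv2, gaussianReal_apply _ hv2]

lemma gmeas_apply {v : ℝ} (hv : 0 < v) {S : Set (ℝ × ℝ)} (hS : MeasurableSet S) :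
    gmeas v S = ∫⁻ p in S, ENNReal.ofReal (rpdf v p) := by
  rw [gmeas_eq_withDensity hv, withDensity_apply _ hS]

instance (v : ℝ) : IsProbabilityMeasure (gmeas v) := by
  unfold gmeas; infer_instance


lemma intIoi {v : ℝ} (hv : 0 < v) (a : ℝ) :
    ∫ r in Ioi a, r * rexp (-r ^ 2 / v) = v / 2 * rexp (-a ^ 2 / v) := by
  have hb : 0 < 1 / v := by positivity
  have hd : ∀ x ∈ Ici a, HasDerivAt (fun r : ℝ => -(v / 2) * rexp (-(1 / v) * r ^ 2))
      (x * rexp (-(1 / v) * x ^ 2)) x := by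
    intro x _
    have h1 : HasDerivAt (fun r : ℝ => -(1 / v) * r ^ 2) (-(1 / v) * (2 * x ^ 1)) x :=
      (hasDerivAt_pow 2 x).const_mul _
    have h2 := (h1.exp).const_mul (-(v / 2))
    refine h2.congr_deriv ?_
    field_simp
  have hint : IntegrableOn (fun x : ℝ => x * rexp (-(1 / v) * x ^ 2)) (Ioi a) :=
    (integrable_mul_exp_neg_mul_sq hb).integrableOn
  have htend : Tendsto (fun y : ℝ => -(v / 2) * rexp (-(1 / v) * y ^ 2)) atTop (𝓝 (-(v / 2) * 0)) := by
    refine Tendsto.const_mul _ ?_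
    refine Real.tendsto_exp_atBot.comp ?_
    exact (tendsto_pow_atTop two_ne_zero).const_mul_atTop_of_neg (by positivity |> neg_lt_zero.2)
  have := integral_Ioi_of_hasDerivAt_of_tendsto' hd hint htend
  have heq : ∀ r : ℝ, r * rexp (-r ^ 2 / v) = r * rexp (-(1 / v) * r ^ 2) := by
    intro r; rw [show -r ^ 2 / v = -(1 / v) * r ^ 2 by ring]
  rw [show (fun r : ℝ => r * rexp (-r ^ 2 / v)) = fun r : ℝ => r * rexp (-(1 / v) * r ^ 2) from funext heq] at *
  rw [this, show -a ^ 2 / v = -(1 / v) * a ^ 2 by ring]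
  ring


lemma gmeas_tail {v : ℝ} (hv : 0 < v) {s : ℝ} (hs : 0 ≤ s) :
    gmeas v {p : ℝ × ℝ | s < p.1 ^ 2 + p.2 ^ 2} ≤ ENNReal.ofReal (rexp (-s / v)) := by
  set T : Set (ℝ × ℝ) := {p : ℝ × ℝ | s < p.1 ^ 2 + p.2 ^ 2} with hTdef
  have hT : MeasurableSet T :=
    measurableSet_lt measurable_const (by fun_prop)
  rw [gmeas_apply hv hT]
  have hb : 0 < 1 / v := by positivity
  have hInt : Integrable (rpdf v) (volume : Measure (ℝ × ℝ)) := by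
    have h1 : Integrable (fun z : ℝ × ℝ => rexp (-(1/v) * z.1 ^ 2) * rexp (-(1/v) * z.2 ^ 2))
        ((volume : Measure ℝ).prod (volume : Measure ℝ)) :=
      (integrable_exp_neg_mul_sq hb).mul_prod (integrable_exp_neg_mul_sq hb)
    rw [Measure.volume_eq_prod]
    have := h1.const_mul ((π * v)⁻¹)
    refine this.congr (Filter.Eventually.of_forall fun p => ?_)
    simp only [rpdf, ← Real.exp_add]
    congr 2
    ring
  rw [← ofReal_integral_eq_lintegral_ofReal hInt.integrableOn
    (Filter.Eventually.of_forall fun p => by unfold rpdf; positivity)]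
  refine le_of_eq (congrArg ENNReal.ofReal ?_)
  have key : ∫ p in T, rpdf v p = rexp (-s / v) := by
    rw [← integral_indicator hT, ← integral_comp_polarCoord_symm (T.indicator (rpdf v))]
    have hcong : ∀ p ∈ polarCoord.target,
        p.1 • (T.indicator (rpdf v) (polarCoord.symm p)) =
        ((Ioi (Real.sqrt s)).indicator (fun r => r * ((π * v)⁻¹ * rexp (-r ^ 2 / v))) p.1)
          * (fun _ : ℝ => (1 : ℝ)) p.2 := by
      rintro ⟨r, θ⟩ ⟨hr, hθ⟩
      simp only [mem_Ioi] at hr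
      dsimp only
      have hrr : (r * Real.cos θ) ^ 2 + (r * Real.sin θ) ^ 2 = r ^ 2 := by
        linear_combination r ^ 2 * (Real.sin_sq_add_cos_sq θ)
      have hmem : polarCoord.symm (r, θ) ∈ T ↔ Real.sqrt s < r := by
        rw [polarCoord_symm_apply]
        simp only [hTdef, mem_setOf_eq]
        rw [hrr]
        exact (Real.sqrt_lt' hr).symm
      have hval : rpdf v (polarCoord.symm (r, θ)) = (π * v)⁻¹ * rexp (-r ^ 2 / v) := by
        rw [polarCoord_symm_apply, rpdf]
        simp only
        rw [hrr]
      by_cases hc : Real.sqrt s < r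
      · rw [Set.indicator_of_mem (hmem.2 hc), Set.indicator_of_mem (Set.mem_Ioi.mpr hc), hval]
        simp [smul_eq_mul]
      · rw [Set.indicator_of_notMem (fun h => hc (hmem.1 h)), Set.indicator_of_notMem (fun h => hc (Set.mem_Ioi.mp h))]
        simp
    rw [setIntegral_congr_fun polarCoord.open_target.measurableSet hcong]
    rw [polarCoord_target, Measure.volume_eq_prod,
      setIntegral_prod_mul ((Ioi (Real.sqrt s)).indicator
        (fun r => r * ((π * v)⁻¹ * rexp (-r ^ 2 / v)))) (fun _ => (1 : ℝ))
        (Ioi (0:ℝ)) (Ioo (-π) π)]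
    have h2 : ∫ θ in Ioo (-π) π, (1 : ℝ) = 2 * π := by
      simp [Real.volume_Ioo]
      rw [max_eq_left (by positivity)]
      ring
    have h3 : ∫ r in Ioi (0:ℝ),
        (Ioi (Real.sqrt s)).indicator (fun r => r * ((π * v)⁻¹ * rexp (-r ^ 2 / v))) r
        = (π * v)⁻¹ * (v / 2 * rexp (-s / v)) := by
      rw [setIntegral_indicator measurableSet_Ioi, Set.Ioi_inter_Ioi,
        max_eq_right (Real.sqrt_nonneg s)]
      rw [show (fun r : ℝ => r * ((π * v)⁻¹ * rexp (-r ^ 2 / v)))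
          = fun r : ℝ => (π * v)⁻¹ * (r * rexp (-r ^ 2 / v)) from funext fun r => by ring]
      rw [integral_const_mul, intIoi hv, Real.sq_sqrt hs]
    rw [h2, h3]
    field_simp
  rw [key]

lemma rpdf_measurable (v : ℝ) : Measurable fun p : ℝ × ℝ => ENNReal.ofReal (rpdf v p) := by
  apply Measurable.ennreal_ofReal
  unfold rpdf
  fun_prop

lemma gmeas_compare {w v : ℝ} (hw : 0 < w) (hwv : w ≤ v) {s : ℝ} (hs : 0 ≤ s)
    {S : Set (ℝ × ℝ)} (hS : MeasurableSet S) (hsub : ∀ p ∈ S, p.1 ^ 2 + p.2 ^ 2 ≤ s) :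
    gmeas v S ≤ ENNReal.ofReal (rexp (s * (1 / w - 1 / v))) * gmeas w S := by
  have hv : 0 < v := lt_of_lt_of_le hw hwv
  rw [gmeas_apply hv hS, gmeas_apply hw hS, ← lintegral_const_mul' _ _ ENNReal.ofReal_ne_top]
  refine setLIntegral_mono (by exact (rpdf_measurable w).const_mul _) fun p hp => ?_
  have hρ0 : 0 ≤ p.1 ^ 2 + p.2 ^ 2 := by positivity
  have hρ : p.1 ^ 2 + p.2 ^ 2 ≤ s := hsub p hp
  have hcpos : 0 ≤ 1 / w - 1 / v := by
    rw [sub_nonneg]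
    exact one_div_le_one_div_of_le hw hwv
  rw [← ENNReal.ofReal_mul (Real.exp_pos _).le]
  refine ENNReal.ofReal_le_ofReal ?_
  unfold rpdf
  calc (π * v)⁻¹ * rexp (-(p.1 ^ 2 + p.2 ^ 2) / v)
      ≤ (π * w)⁻¹ * rexp (s * (1 / w - 1 / v) + -(p.1 ^ 2 + p.2 ^ 2) / w) := by
        refine mul_le_mul ?_ (Real.exp_le_exp.mpr ?_) (Real.exp_pos _).le (by positivity)
        · apply inv_anti₀ (by positivity)
          nlinarith [Real.pi_pos]
        · have h1 : (p.1 ^ 2 + p.2 ^ 2) * (1 / w - 1 / v) ≤ s * (1 / w - 1 / v) :=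
            mul_le_mul_of_nonneg_right hρ hcpos
          have h2 : (p.1 ^ 2 + p.2 ^ 2) * (1 / w - 1 / v)
              = -(p.1 ^ 2 + p.2 ^ 2) / v - -(p.1 ^ 2 + p.2 ^ 2) / w := by
            field_simp
            ring
          linarith
    _ = rexp (s * (1 / w - 1 / v)) * ((π * w)⁻¹ * rexp (-(p.1 ^ 2 + p.2 ^ 2) / w)) := by
        rw [Real.exp_add]
        ring

lemma gmeasF1 {w r : ℝ} (hw : 0 < w) (hr : 0 ≤ r) {S : Set (ℝ × ℝ)} (hS : MeasurableSet S)
    {s : ℝ} (hs : 0 ≤ s) :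
    gmeas (r + w) S ≤ ENNReal.ofReal (rexp (-s / (r + w)))
      + ENNReal.ofReal (rexp (s * (1 / w - 1 / (r + w)))) * gmeas w S := by
  have hv : 0 < r + w := by linarith
  set T := {p : ℝ × ℝ | s < p.1 ^ 2 + p.2 ^ 2} with hTdef
  have hT : MeasurableSet T := measurableSet_lt measurable_const (by fun_prop)
  calc gmeas (r + w) S ≤ gmeas (r + w) (T ∪ (S ∩ Tᶜ)) := by
        refine measure_mono fun p hp => ?_
        by_cases h : p ∈ T
        exacts [Or.inl h, Or.inr ⟨hp, h⟩]
    _ ≤ gmeas (r + w) T + gmeas (r + w) (S ∩ Tᶜ) := measure_union_le _ _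
    _ ≤ ENNReal.ofReal (rexp (-s / (r + w)))
        + ENNReal.ofReal (rexp (s * (1 / w - 1 / (r + w)))) * gmeas w S := by
        refine add_le_add (gmeas_tail hv hs) ?_
        refine le_trans (gmeas_compare hw (by linarith) hs (hS.inter hT.compl)
          fun p hp => not_lt.1 hp.2) ?_
        exact mul_le_mul_right (measure_mono inter_subset_left) _

lemma cgauss_eq_s6 (v : ℝ) (D : Set ℂ) :
    cgauss 0 v D = gmeas v (Complex.measurableEquivRealProd.symm ⁻¹' D) := by
  rw [cgauss, MeasurableEquiv.map_apply, gmeas]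
  norm_num

lemma realF1 {w r : ℝ} (hw : 0 < w) (hr : 0 ≤ r) {D : Set ℂ} (hD : MeasurableSet D)
    {s : ℝ} (hs : 0 ≤ s) :
    ((cgauss 0 (r + w)) D).toReal ≤ rexp (-s / (r + w))
      + rexp (s * (1 / w - 1 / (r + w))) * ((cgauss 0 w) D).toReal := by
  have hS : MeasurableSet (Complex.measurableEquivRealProd.symm ⁻¹' D) :=
    Complex.measurableEquivRealProd.symm.measurable hD
  rw [cgauss_eq_s6, cgauss_eq_s6]
  set S := Complex.measurableEquivRealProd.symm ⁻¹' D
  have h := gmeasF1 hw hr hS hs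
  have hfin : ENNReal.ofReal (rexp (-s / (r + w)))
      + ENNReal.ofReal (rexp (s * (1 / w - 1 / (r + w)))) * gmeas w S ≠ ⊤ := by
    exact ENNReal.add_ne_top.2 ⟨ENNReal.ofReal_ne_top,
      ENNReal.mul_ne_top ENNReal.ofReal_ne_top (measure_ne_top _ _)⟩
  calc (gmeas (r + w) S).toReal
      ≤ (ENNReal.ofReal (rexp (-s / (r + w)))
        + ENNReal.ofReal (rexp (s * (1 / w - 1 / (r + w)))) * gmeas w S).toReal :=
        ENNReal.toReal_mono hfin h
    _ = rexp (-s / (r + w)) + rexp (s * (1 / w - 1 / (r + w))) * (gmeas w S).toReal := by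
        rw [ENNReal.toReal_add ENNReal.ofReal_ne_top
          (ENNReal.mul_ne_top ENNReal.ofReal_ne_top (measure_ne_top _ _)),
          ENNReal.toReal_mul, ENNReal.toReal_ofReal (Real.exp_pos _).le,
          ENNReal.toReal_ofReal (Real.exp_pos _).le]

lemma xlog_le {p : ℝ} (hp0 : 0 < p) (hp1 : p ≤ 1) : p * Real.log (1 / p) ≤ (Real.exp 1)⁻¹ := by
  have he : (0:ℝ) < Real.exp 1 := Real.exp_pos 1
  have h := Real.log_le_sub_one_of_pos (x := 1 / (Real.exp 1 * p)) (by positivity)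
  have hlog : Real.log (1 / (Real.exp 1 * p)) = -(1 + Real.log p) := by
    rw [one_div, Real.log_inv, Real.log_mul (ne_of_gt he) (ne_of_gt hp0), Real.log_exp]
  rw [hlog] at h
  have h2 : -Real.log p ≤ 1 / (Real.exp 1 * p) := by linarith
  have h3 : p * (-Real.log p) ≤ p * (1 / (Real.exp 1 * p)) :=
    mul_le_mul_of_nonneg_left h2 hp0.le
  have h4 : p * (1 / (Real.exp 1 * p)) = (Real.exp 1)⁻¹ := by
    field_simp
  rw [one_div, Real.log_inv]
  linarith

lemma p_eq_zero {w r p : ℝ} (hw : 0 < w) (hr : 0 ≤ r) (hp0 : 0 ≤ p)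
    (h : ∀ s : ℝ, 0 ≤ s → p ≤ rexp (-s / (r + w)) + rexp (s * (1 / w - 1 / (r + w))) * 0) :
    p = 0 := by
  have hv : 0 < r + w := by linarith
  have hple : p ≤ 0 := by
    refine ge_of_tendsto Real.tendsto_exp_neg_atTop_nhds_zero ?_
    filter_upwards [Filter.eventually_ge_atTop (0:ℝ)] with x hx
    have := h ((r + w) * x) (by positivity)
    rw [mul_zero, add_zero] at this
    rw [show -((r + w) * x) / (r + w) = -x by field_simp] at this
    exact this
  linarith

set_option maxHeartbeats 1000000 in
lemma key_bound {w r ε : ℝ} (hw : 0 < w) (hr : 0 ≤ r) (hε0 : 0 < ε) (hε1 : ε < 1)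
    {p q : ℝ} (hp0 : 0 ≤ p) (hp1 : p ≤ 1) (hq0 : 0 ≤ q) (hq2 : q ≤ 1 / 2)
    (h : ∀ s : ℝ, 0 ≤ s → p ≤ rexp (-s / (r + w)) + rexp (s * (1 / w - 1 / (r + w))) * q) :
    p * Real.log (p / q) + (1 - p) * Real.log ((1 - p) / (1 - q)) ≤
      Real.log (1 / (1 - ε)) + (r / w) * ((Real.exp 1)⁻¹ + Real.log (1 / ε)) + Real.log 2 := by
  have hv : 0 < r + w := by linarith
  have hRA : 0 ≤ Real.log (1 / (1 - ε)) := by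
    apply Real.log_nonneg
    rw [le_div_iff₀ (by linarith)]
    linarith
  have hRε : 0 ≤ Real.log (1 / ε) := by
    apply Real.log_nonneg
    rw [le_div_iff₀ hε0]
    linarith
  have hRB : 0 ≤ (r / w) * ((Real.exp 1)⁻¹ + Real.log (1 / ε)) := by positivity
  have hRC : 0 ≤ Real.log 2 := Real.log_nonneg one_le_two
  -- second term
  have hsecond : (1 - p) * Real.log ((1 - p) / (1 - q)) ≤ Real.log 2 := by
    have h1q : 0 < 1 - q := by linarith
    rcases eq_or_lt_of_le hp1 with hp | hp'
    · rw [← hp]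
      simp [hRC]
    · have h1p : 0 < 1 - p := by linarith
      have hratio2 : (1 - p) / (1 - q) ≤ 2 := by
        rw [div_le_iff₀ h1q]
        linarith
      rcases le_or_gt (Real.log ((1 - p) / (1 - q))) 0 with hl | hl
      · have : (1 - p) * Real.log ((1 - p) / (1 - q)) ≤ 0 :=
          mul_nonpos_iff.2 (Or.inl ⟨by linarith, hl⟩)
        linarith
      · calc (1 - p) * Real.log ((1 - p) / (1 - q)) ≤ 1 * Real.log ((1 - p) / (1 - q)) :=
            mul_le_mul_of_nonneg_right (by linarith) hl.le
          _ ≤ Real.log 2 := by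
            rw [one_mul]
            exact Real.log_le_log (by positivity) hratio2
  -- first term
  have hfirst : p * Real.log (p / q) ≤
      Real.log (1 / (1 - ε)) + (r / w) * ((Real.exp 1)⁻¹ + Real.log (1 / ε)) := by
    rcases eq_or_lt_of_le hq0 with hq | hqpos
    · have hzp := p_eq_zero hw hr hp0 (fun s hs => by simpa [← hq] using h s hs)
      rw [hzp, zero_mul]
      linarith
    · rcases eq_or_lt_of_le hp0 with hp | hppos
      · rw [← hp, zero_mul]
        linarith
      · have hεp1 : ε * p ≤ 1 := by nlinarith
        have hεppos : 0 < ε * p := by positivity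
        have hlog0 : 0 ≤ Real.log (1 / (ε * p)) := by
          apply Real.log_nonneg
          rw [le_div_iff₀ hεppos]
          linarith
        set s₀ := (r + w) * Real.log (1 / (ε * p)) with hs₀def
        have hs₀ : 0 ≤ s₀ := by
          rw [hs₀def]
          exact mul_nonneg hv.le hlog0
        have hexp : rexp (-s₀ / (r + w)) = ε * p := by
          rw [hs₀def, show -((r + w) * Real.log (1 / (ε * p))) / (r + w)
            = -Real.log (1 / (ε * p)) by field_simp]
          rw [one_div, Real.log_inv, neg_neg, Real.exp_log hεppos]
        set E := rexp (s₀ * (1 / w - 1 / (r + w))) with hEdef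
        have hEpos : 0 < E := Real.exp_pos _
        have hh := h s₀ hs₀
        rw [hexp] at hh
        have hq' : (1 - ε) * p ≤ E * q := by
          have hexp1 : (1 - ε) * p = p - ε * p := by ring
          linarith
        have hdiv : (1 - ε) * p / E ≤ q := by
          rw [div_le_iff₀ hEpos]
          have : E * q = q * E := mul_comm _ _
          linarith
        have hdivpos : 0 < (1 - ε) * p / E :=
          div_pos (mul_pos (by linarith) hppos) hEpos
        have hlogq : Real.log ((1 - ε) * p / E) ≤ Real.log q := Real.log_le_log hdivpos hdiv
        have hexpand : Real.log ((1 - ε) * p / E)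
            = Real.log (1 - ε) + Real.log p - Real.log E := by
          rw [Real.log_div (ne_of_gt (mul_pos (by linarith) hppos)) (ne_of_gt hEpos),
            Real.log_mul (ne_of_gt (by linarith : (0:ℝ) < 1 - ε)) (ne_of_gt hppos)]
        have hlogE : Real.log E = (r / w) * Real.log (1 / (ε * p)) := by
          rw [hEdef, Real.log_exp, hs₀def]
          have hvc : (r + w) * (1 / w - 1 / (r + w)) = r / w := by
            field_simp
            ring
          calc (r + w) * Real.log (1 / (ε * p)) * (1 / w - 1 / (r + w))
              = ((r + w) * (1 / w - 1 / (r + w))) * Real.log (1 / (ε * p)) := by ring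
            _ = (r / w) * Real.log (1 / (ε * p)) := by rw [hvc]
        have hlogpq : Real.log (p / q) ≤ Real.log (1 / (1 - ε)) + Real.log E := by
          rw [Real.log_div (ne_of_gt hppos) (ne_of_gt hqpos), one_div, Real.log_inv]
          linarith
        have hsplit : Real.log (1 / (ε * p)) = Real.log (1 / ε) + Real.log (1 / p) := by
          rw [show (1:ℝ) / (ε * p) = (1 / ε) * (1 / p) by field_simp]
          exact Real.log_mul (by positivity) (by positivity)
        have hxlog := xlog_le hppos hp1
        have hplogε : p * Real.log (1 / ε) ≤ Real.log (1 / ε) := by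
          have := mul_le_mul_of_nonneg_right hp1 hRε
          linarith
        have hplogE : p * Real.log E ≤ (r / w) * ((Real.exp 1)⁻¹ + Real.log (1 / ε)) := by
          rw [hlogE, hsplit]
          have hrw : 0 ≤ r / w := by positivity
          calc p * ((r / w) * (Real.log (1 / ε) + Real.log (1 / p)))
              = (r / w) * (p * Real.log (1 / ε) + p * Real.log (1 / p)) := by ring
            _ ≤ (r / w) * (Real.log (1 / ε) + (Real.exp 1)⁻¹) := by
                refine mul_le_mul_of_nonneg_left ?_ hrw
                linarith
            _ = (r / w) * ((Real.exp 1)⁻¹ + Real.log (1 / ε)) := by ring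
        have hplogA : p * Real.log (1 / (1 - ε)) ≤ Real.log (1 / (1 - ε)) := by
          have := mul_le_mul_of_nonneg_right hp1 hRA
          linarith
        calc p * Real.log (p / q) ≤ p * (Real.log (1 / (1 - ε)) + Real.log E) :=
            mul_le_mul_of_nonneg_left hlogpq hp0
          _ = p * Real.log (1 / (1 - ε)) + p * Real.log E := by ring
          _ ≤ Real.log (1 / (1 - ε)) + (r / w) * ((Real.exp 1)⁻¹ + Real.log (1 / ε)) := by
              linarith
  linarith

lemma cgauss_toReal_le_one (v : ℝ) (D : Set ℂ) : ((cgauss 0 v) D).toReal ≤ 1 := by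
  rw [cgauss_eq_s6]
  calc ((gmeas v) (Complex.measurableEquivRealProd.symm ⁻¹' D)).toReal
      ≤ (1 : ℝ≥0∞).toReal := ENNReal.toReal_mono ENNReal.one_ne_top (prob_le_one)
    _ = 1 := by simp

lemma compl_toReal (v : ℝ) {D : Set ℂ} (hD : MeasurableSet D) :
    ((cgauss 0 v) Dᶜ).toReal = 1 - ((cgauss 0 v) D).toReal := by
  have hS : MeasurableSet (Complex.measurableEquivRealProd.symm ⁻¹' D) :=
    Complex.measurableEquivRealProd.symm.measurable hD
  rw [cgauss_eq_s6, cgauss_eq_s6, Set.preimage_compl, measure_compl hS (measure_ne_top _ _),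
    measure_univ, ENNReal.toReal_sub_of_le prob_le_one ENNReal.one_ne_top, ENNReal.toReal_one]

lemma bre_bound {w r ε : ℝ} (hw : 0 < w) (hr : 0 ≤ r) (hε0 : 0 < ε) (hε1 : ε < 1)
    {D : Set ℂ} (hD : MeasurableSet D) :
    bre ((cgauss 0 (r + w)) D).toReal ((cgauss 0 w) D).toReal ≤
      ENNReal.ofReal (Real.log (1 / (1 - ε))
        + (r / w) * ((Real.exp 1)⁻¹ + Real.log (1 / ε)) + Real.log 2) := by
  set p := ((cgauss 0 (r + w)) D).toReal with hpdef
  set q := ((cgauss 0 w) D).toReal with hqdef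
  have hp0 : 0 ≤ p := ENNReal.toReal_nonneg
  have hq0 : 0 ≤ q := ENNReal.toReal_nonneg
  have hp1 : p ≤ 1 := cgauss_toReal_le_one _ _
  have hq1 : q ≤ 1 := cgauss_toReal_le_one _ _
  have h : ∀ s : ℝ, 0 ≤ s → p ≤ rexp (-s / (r + w)) + rexp (s * (1 / w - 1 / (r + w))) * q :=
    fun s hs => realF1 hw hr hD hs
  have h' : ∀ s : ℝ, 0 ≤ s →
      1 - p ≤ rexp (-s / (r + w)) + rexp (s * (1 / w - 1 / (r + w))) * (1 - q) := by
    intro s hs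
    have := realF1 hw hr hD.compl hs
    rwa [compl_toReal _ hD, compl_toReal _ hD] at this
  have hq_zero : q = 0 → p = 0 := fun hq =>
    p_eq_zero hw hr hp0 (fun s hs => by simpa [hq] using h s hs)
  have hq_one : q = 1 → p = 1 := by
    intro hq
    have h1p : 1 - p = 0 :=
      p_eq_zero hw hr (by linarith) (fun s hs => by simpa [hq] using h' s hs)
    linarith
  rw [bre, if_neg]
  · refine ENNReal.ofReal_le_ofReal ?_
    rcases le_or_gt q (1 / 2) with hc | hc
    · exact key_bound hw hr hε0 hε1 hp0 hp1 hq0 hc h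
    · have hb := key_bound hw hr hε0 hε1 (p := 1 - p) (q := 1 - q)
        (by linarith) (by linarith) (by linarith) (by linarith) h'
      rw [show (1:ℝ) - (1 - p) = p by ring, show (1:ℝ) - (1 - q) = q by ring] at hb
      linarith
  · rintro ⟨hq01, hpq⟩
    rcases hq01 with hq | hq
    · exact hpq ((hq_zero hq).trans hq.symm)
    · exact hpq ((hq_one hq).trans hq.symm)

/-- Asymptotic noncoherent bound: the limsup, as `|ξ| → ∞`, of the best normalized binary
relative entropy achievable by one-bit quantizers on the noncoherent channel is at most
`1/(e·σ²)`, which is strictly less than `1/σ²`. -/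
theorem noncoherent_asymptotic_bound (σ : ℝ) (hσ : 0 < σ) :
    Filter.limsup
        (fun ξ : ℂ =>
          (⨆ (D : Set ℂ) (_ : MeasurableSet D),
              bre ((cgauss 0 (‖ξ‖ ^ 2 + σ ^ 2)) D).toReal
                ((cgauss 0 (σ ^ 2)) D).toReal) /
            ENNReal.ofReal (‖ξ‖ ^ 2))
        (Filter.comap (fun z : ℂ => ‖z‖) Filter.atTop) ≤
      ENNReal.ofReal (1 / (Real.exp 1 * σ ^ 2)) ∧
    ENNReal.ofReal (1 / (Real.exp 1 * σ ^ 2)) < ENNReal.ofReal (1 / σ ^ 2) := by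
  have hwpos : 0 < σ ^ 2 := by positivity
  have hexp1 : (1:ℝ) < Real.exp 1 := by linarith [Real.add_one_le_exp 1]
  constructor
  · refine ENNReal.le_of_forall_pos_le_add fun η hη _ => ?_
    have hη' : (0:ℝ) < (η : ℝ) := hη
    set w := σ ^ 2 with hwdef
    set ε : ℝ := rexp (-(w * η / 2)) with hεdef
    have hε0 : 0 < ε := Real.exp_pos _
    have hε1 : ε < 1 := by
      rw [hεdef, Real.exp_lt_one_iff]
      nlinarith
    have hlogε : Real.log (1 / ε) = w * η / 2 := by
      rw [one_div, Real.log_inv, hεdef, Real.log_exp]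
      ring
    set A : ℝ := Real.log (1 / (1 - ε)) + Real.log 2 with hAdef
    have hA0 : 0 ≤ A := by
      refine add_nonneg (Real.log_nonneg ?_) (Real.log_nonneg one_le_two)
      rw [le_div_iff₀ (by linarith)]
      linarith
    set a : ℝ := Real.sqrt (2 * A / η + 1) with hadef
    have ha2 : a ^ 2 = 2 * A / η + 1 := Real.sq_sqrt (by positivity)
    have hapos : 0 < a := Real.sqrt_pos.2 (by positivity)
    have hev : ∀ᶠ ξ : ℂ in Filter.comap (fun z : ℂ => ‖z‖) Filter.atTop,
        (⨆ (D : Set ℂ) (_ : MeasurableSet D),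
            bre ((cgauss 0 (‖ξ‖ ^ 2 + σ ^ 2)) D).toReal
              ((cgauss 0 (σ ^ 2)) D).toReal) / ENNReal.ofReal (‖ξ‖ ^ 2)
          ≤ ENNReal.ofReal (1 / (Real.exp 1 * w) + η) := by
      have hmem : {ξ : ℂ | a ≤ ‖ξ‖} ∈ Filter.comap (fun z : ℂ => ‖z‖) Filter.atTop :=
        Filter.preimage_mem_comap (Filter.Ici_mem_atTop a)
      filter_upwards [hmem] with ξ hξ
      set r : ℝ := ‖ξ‖ ^ 2 with hrdef
      have hra : a ^ 2 ≤ r := by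
        rw [hrdef]
        exact pow_le_pow_left₀ hapos.le hξ 2
      have hrpos : 0 < r := lt_of_lt_of_le (by positivity) hra
      have hsup : (⨆ (D : Set ℂ) (_ : MeasurableSet D),
          bre ((cgauss 0 (r + w)) D).toReal ((cgauss 0 w) D).toReal)
          ≤ ENNReal.ofReal (Real.log (1 / (1 - ε))
            + (r / w) * ((Real.exp 1)⁻¹ + Real.log (1 / ε)) + Real.log 2) :=
        iSup₂_le fun D hD => bre_bound hwpos hrpos.le hε0 hε1 hD
      calc (⨆ (D : Set ℂ) (_ : MeasurableSet D),
          bre ((cgauss 0 (r + w)) D).toReal ((cgauss 0 w) D).toReal) / ENNReal.ofReal r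
          ≤ ENNReal.ofReal (Real.log (1 / (1 - ε))
            + (r / w) * ((Real.exp 1)⁻¹ + Real.log (1 / ε)) + Real.log 2) / ENNReal.ofReal r :=
            ENNReal.div_le_div_right hsup _
        _ = ENNReal.ofReal ((Real.log (1 / (1 - ε))
            + (r / w) * ((Real.exp 1)⁻¹ + Real.log (1 / ε)) + Real.log 2) / r) :=
            (ENNReal.ofReal_div_of_pos hrpos).symm
        _ ≤ ENNReal.ofReal (1 / (Real.exp 1 * w) + η) := by
            refine ENNReal.ofReal_le_ofReal ?_
            have hM : Real.log (1 / (1 - ε))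
                + (r / w) * ((Real.exp 1)⁻¹ + Real.log (1 / ε)) + Real.log 2
                = A + (r / w) * ((Real.exp 1)⁻¹ + w * η / 2) := by
              rw [hlogε, hAdef]
              ring
            rw [hM]
            have hsplit : (A + (r / w) * ((Real.exp 1)⁻¹ + w * η / 2)) / r
                = A / r + (Real.exp 1)⁻¹ / w + η / 2 := by
              field_simp
              ring
            rw [hsplit]
            have hAr : A / r ≤ η / 2 := by
              rw [div_le_iff₀ hrpos]
              have h5 : η / 2 * (2 * A / η + 1) = A + η / 2 := by
                field_simp
              have h6 : η / 2 * (2 * A / η + 1) ≤ η / 2 * r := by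
                refine mul_le_mul_of_nonneg_left ?_ (by positivity)
                rw [← ha2]
                exact hra
              nlinarith
            have hinv : (Real.exp 1)⁻¹ / w = 1 / (Real.exp 1 * w) := by
              field_simp
            linarith [hinv.le, hinv.ge]
    have hlim := Filter.limsup_le_of_le (h := hev)
    refine le_trans hlim ?_
    refine le_trans (ENNReal.ofReal_add_le) ?_
    rw [ENNReal.ofReal_coe_nnreal]
  · rw [ENNReal.ofReal_lt_ofReal_iff (by positivity)]
    apply one_div_lt_one_div_of_lt hwpos
    nlinarith
end

section
/- Theorem 2, noncoherent case, lower bound: Let σ > 0 and for x ∈ ℂ let the output Ỹ_x have Re Ỹ_x and Im Ỹ_x independent real Gaussians, each with mean 0 and variance (|x|² + σ²)/2. Then sup over ξ ∈ ℂ \ {0} and Borel sets D_R, D_I ⊆ ℝ of [ d( P(Re Ỹ_ξ ∈ D_R) ‖ P(Re Ỹ_0 ∈ D_R) ) + d( P(Im Ỹ_ξ ∈ D_I) ‖ P(Im Ỹ_0 ∈ D_I) ) ] / |ξ|² ≥ 2·Q(1)/σ², where Q(1) is the probability that a standard real Gaussian is at least 1. The bound is approached by D_R = D_I = [T, ∞)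 with T = (|ξ|² + σ²)/2 as |ξ| → ∞. -/
open MeasureTheory ProbabilityTheory Complex
open scoped ENNReal NNReal

lemma gauss_scale (a c : ℝ) (ha : 0 < a) :
    gaussianReal 0 ((a ^ 2).toNNReal) {x : ℝ | c * a ≤ |x|}
      = gaussianReal 0 1 {x : ℝ | c ≤ |x|} := by
  have hmap := gaussianReal_map_const_mul (μ := 0) (v := 1) a
  have hvar : (NNReal.mk (a ^ 2) (sq_nonneg a)) * 1 = (a ^ 2).toNNReal := by
    ext
    simp [Real.coe_toNNReal _ (sq_nonneg a)]
  rw [mul_zero, hvar] at hmap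
  have hmeas : MeasurableSet {x : ℝ | c * a ≤ |x|} :=
    (isClosed_le continuous_const _root_.continuous_abs).measurableSet
  rw [← hmap, Measure.map_apply (measurable_const_mul a) hmeas]
  congr 1
  ext x
  simp only [Set.mem_preimage, Set.mem_setOf_eq, abs_mul, abs_of_pos ha, mul_comm c a]
  exact mul_le_mul_iff_of_pos_left ha

lemma gauss_two_sided (c : ℝ) (hc : 0 < c) :
    gaussianReal 0 1 {x : ℝ | c ≤ |x|} = 2 * gaussianReal 0 1 {x : ℝ | c ≤ x} := by
  have hset : {x : ℝ | c ≤ |x|} = {x : ℝ | x ≤ -c} ∪ {x : ℝ | c ≤ x} := by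
    ext x
    simp only [Set.mem_setOf_eq, Set.mem_union, le_abs, le_neg]
    tauto
  have hm1 : MeasurableSet {x : ℝ | c ≤ x} :=
    (isClosed_le continuous_const continuous_id).measurableSet
  have hdisj : Disjoint {x : ℝ | x ≤ -c} {x : ℝ | c ≤ x} := by
    rw [Set.disjoint_left]
    intro x hx hx'
    simp only [Set.mem_setOf_eq] at hx hx'
    linarith
  rw [hset, measure_union hdisj hm1]
  have hneg : gaussianReal 0 1 {x : ℝ | x ≤ -c} = gaussianReal 0 1 {x : ℝ | c ≤ x} := by
    have hmap := gaussianReal_map_const_mul (μ := 0) (v := 1) (-1 : ℝ)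
    have hvar : (NNReal.mk ((-1 : ℝ) ^ 2) (sq_nonneg _)) * 1 = 1 := by
      ext; norm_num
    rw [mul_zero, hvar] at hmap
    conv_lhs => rw [← hmap]
    rw [show {x : ℝ | x ≤ -c} = Set.Iic (-c) from rfl,
      Measure.map_apply (measurable_const_mul _) measurableSet_Iic]
    congr 1
    ext x
    simp only [Set.mem_preimage, Set.mem_Iic, Set.mem_setOf_eq, neg_one_mul]
    constructor <;> intro <;> linarith
  rw [hneg, two_mul]

lemma sqrt_two_pi_le : Real.sqrt (2 * Real.pi) ≤ 2.51 := by
  rw [show (2.51 : ℝ) = Real.sqrt (2.51 ^ 2) from (Real.sqrt_sq (by norm_num)).symm]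
  apply Real.sqrt_le_sqrt
  nlinarith [Real.pi_lt_d2]

lemma le_sqrt_two_pi : (2.5 : ℝ) ≤ Real.sqrt (2 * Real.pi) := by
  rw [show (2.5 : ℝ) = Real.sqrt (2.5 ^ 2) from (Real.sqrt_sq (by norm_num)).symm]
  apply Real.sqrt_le_sqrt
  nlinarith [Real.pi_gt_d6]

lemma gaussianPDFReal_one (x : ℝ) :
    gaussianPDFReal 0 1 x = (Real.sqrt (2 * Real.pi))⁻¹ * Real.exp (-x ^ 2 / 2) := by
  simp [gaussianPDFReal]

lemma Q14_bound :
    ((gaussianReal 0 1) {x : ℝ | (14 : ℝ) ≤ x}).toReal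
      ≤ Real.exp (-98) / (14 * Real.sqrt (2 * Real.pi)) := by
  rw [show {x : ℝ | (14 : ℝ) ≤ x} = Set.Ici 14 from rfl,
    gaussianReal_apply_eq_integral 0 one_ne_zero,
    ENNReal.toReal_ofReal
      (setIntegral_nonneg measurableSet_Ici fun x _ => gaussianPDFReal_nonneg 0 1 x)]
  have hIoi : ∫ x in Set.Ici (14 : ℝ), gaussianPDFReal 0 1 x
      = ∫ x in Set.Ioi (14 : ℝ), gaussianPDFReal 0 1 x := integral_Ici_eq_integral_Ioi
  rw [hIoi]
  have hintg : IntegrableOn (fun x : ℝ => (Real.sqrt (2 * Real.pi))⁻¹ *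
      (Real.exp 98 * Real.exp (-14 * x))) (Set.Ioi 14) := by
    exact (((exp_neg_integrableOn_Ioi 14 (by norm_num : (0:ℝ) < 14)).const_mul
      (Real.exp 98)).const_mul _)
  have hmono : ∫ x in Set.Ioi (14 : ℝ), gaussianPDFReal 0 1 x
      ≤ ∫ x in Set.Ioi (14 : ℝ),
          (Real.sqrt (2 * Real.pi))⁻¹ * (Real.exp 98 * Real.exp (-14 * x)) := by
    apply setIntegral_mono_on (integrable_gaussianPDFReal 0 1).integrableOn hintg
      measurableSet_Ioi
    intro x hx
    rw [gaussianPDFReal_one, ← Real.exp_add]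
    have h1 : Real.exp (-x ^ 2 / 2) ≤ Real.exp (98 + -14 * x) := by
      apply Real.exp_le_exp.2
      nlinarith [sq_nonneg (x - 14)]
    have h2 : (0:ℝ) < (Real.sqrt (2 * Real.pi))⁻¹ := by positivity
    nlinarith
  refine hmono.trans ?_
  rw [integral_const_mul, integral_const_mul]
  have hval : ∫ x in Set.Ioi (14 : ℝ), Real.exp (-14 * x) = 14⁻¹ * Real.exp (-196) := by
    have := integral_comp_mul_left_Ioi (fun y => Real.exp (-y)) 14
      (by norm_num : (0:ℝ) < 14)
    simp only [smul_eq_mul] at this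
    rw [show (-196 : ℝ) = -(14 * 14) by norm_num, ← integral_exp_neg_Ioi]
    rw [show (fun x : ℝ => Real.exp (-14 * x)) = fun x : ℝ => Real.exp (-(14 * x)) by
      funext x; ring_nf]
    exact this
  rw [hval, show Real.exp 98 * (14⁻¹ * Real.exp (-196))
      = 14⁻¹ * Real.exp (-98) by rw [← mul_assoc, mul_comm (Real.exp 98) (14⁻¹:ℝ), mul_assoc, ← Real.exp_add]; norm_num,
    div_eq_mul_inv, mul_inv]
  ring_nf
  exact le_refl _

lemma Q1_lb : Real.exp (-2) / 2.51 ≤ ((gaussianReal 0 1) {x : ℝ | (1 : ℝ) ≤ x}).toReal := by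
  have hsub : (gaussianReal 0 1) (Set.Ioc 1 2) ≤ (gaussianReal 0 1) {x : ℝ | (1 : ℝ) ≤ x} := by
    apply measure_mono
    intro x hx
    exact le_of_lt hx.1
  have hIoc : Real.exp (-2) / 2.51
      ≤ ((gaussianReal 0 1) (Set.Ioc (1:ℝ) 2)).toReal := by
    rw [gaussianReal_apply_eq_integral 0 one_ne_zero,
      ENNReal.toReal_ofReal
        (setIntegral_nonneg measurableSet_Ioc fun x _ => gaussianPDFReal_nonneg 0 1 x)]
    have hconst : ∫ _x in Set.Ioc (1:ℝ) 2, (Real.exp (-2) / 2.51 : ℝ)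
        = Real.exp (-2) / 2.51 := by
      rw [setIntegral_const]
      simp [Real.volume_Ioc]
      ring
    rw [← hconst]
    apply setIntegral_mono_on
    · exact integrableOn_const (by simp [Real.volume_Ioc])
    · exact (integrable_gaussianPDFReal 0 1).integrableOn
    · exact measurableSet_Ioc
    · intro x hx
      rw [gaussianPDFReal_one]
      have h1 : Real.exp (-2) ≤ Real.exp (-x ^ 2 / 2) := by
        apply Real.exp_le_exp.2
        rcases hx with ⟨hx1, hx2⟩
        nlinarith
      have h2 : (2.51 : ℝ)⁻¹ ≤ (Real.sqrt (2 * Real.pi))⁻¹ := by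
        apply inv_anti₀
        · positivity
        · exact sqrt_two_pi_le
      have h3 : (0:ℝ) < Real.exp (-2) := Real.exp_pos _
      calc Real.exp (-2) / 2.51 = (2.51:ℝ)⁻¹ * Real.exp (-2) := by ring
        _ ≤ (Real.sqrt (2 * Real.pi))⁻¹ * Real.exp (-x ^ 2 / 2) := by
            apply mul_le_mul h2 h1 h3.le (by positivity)
  refine hIoc.trans (ENNReal.toReal_mono (measure_ne_top _ _) hsub)

lemma core_ineq (p q : ℝ) (hq0 : 0 < q)
    (hq : q ≤ Real.exp (-98) / (7 * Real.sqrt (2 * Real.pi)))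
    (hp0 : 0 < p) (hp1 : p ≤ 1) (hpl : Real.exp (-2.3) ≤ p) :
    97.5 * p ≤ p * Real.log (p / q) + (1 - p) * Real.log ((1 - p) / (1 - q)) := by
  have he3 : Real.exp 3 ≤ 21 := by
    calc Real.exp 3 = (Real.exp 1) ^ 3 := by rw [← Real.exp_nat_mul]; norm_num
      _ ≤ 2.7182818286 ^ 3 := by
          apply pow_le_pow_left₀ (Real.exp_pos 1).le Real.exp_one_lt_d9.le
      _ ≤ 21 := by norm_num
  have he28 : Real.exp 2.8 ≤ 17.5 := by
    have h02 : (1.2 : ℝ) ≤ Real.exp 0.2 := by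
      have := Real.add_one_le_exp (0.2 : ℝ); linarith
    have hmul : Real.exp 2.8 * Real.exp 0.2 = Real.exp 3 := by
      rw [← Real.exp_add]; norm_num
    nlinarith [Real.exp_pos (2.8 : ℝ)]
  have hqB : q ≤ Real.exp (-100.8) := by
    have h7 : Real.exp 2.8 ≤ 7 * Real.sqrt (2 * Real.pi) := by
      nlinarith [le_sqrt_two_pi]
    have : Real.exp (-98) / (7 * Real.sqrt (2 * Real.pi))
        ≤ Real.exp (-98) / Real.exp 2.8 := by
      apply div_le_div_of_nonneg_left (Real.exp_pos _).le (Real.exp_pos _) h7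
    refine hq.trans (this.trans ?_)
    rw [← Real.exp_sub]
    norm_num
  have hq1 : q < 1 := lt_of_le_of_lt hqB (by
    calc Real.exp (-100.8) < Real.exp 0 := Real.exp_lt_exp.2 (by norm_num)
      _ = 1 := Real.exp_zero)
  have hlogq : Real.log q ≤ -100.8 := by
    calc Real.log q ≤ Real.log (Real.exp (-100.8)) := Real.log_le_log hq0 hqB
      _ = -100.8 := Real.log_exp _
  have hlogp : (-2.3 : ℝ) ≤ Real.log p := by
    calc (-2.3 : ℝ) = Real.log (Real.exp (-2.3)) := (Real.log_exp _).symm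
      _ ≤ Real.log p := Real.log_le_log (Real.exp_pos _) hpl
  have hterm1 : p * 98.5 ≤ p * Real.log (p / q) := by
    apply mul_le_mul_of_nonneg_left _ hp0.le
    rw [Real.log_div hp0.ne' hq0.ne']
    linarith
  have hterm2 : -p ≤ (1 - p) * Real.log ((1 - p) / (1 - q)) := by
    rcases eq_or_lt_of_le hp1 with h1 | h1
    · rw [h1]; norm_num
    · have h1p : 0 < 1 - p := by linarith
      have h1q : 0 < 1 - q := by linarith
      rw [Real.log_div h1p.ne' h1q.ne']
      have hlq : Real.log (1 - q) ≤ 0 := Real.log_nonpos (by linarith) (by linarith)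
      have hlp : -(p / (1 - p)) ≤ Real.log (1 - p) := by
        have := Real.log_le_sub_one_of_pos (x := (1 - p)⁻¹) (by positivity)
        rw [Real.log_inv] at this
        have h2 : (1 - p)⁻¹ - 1 = p / (1 - p) := by field_simp; ring
        linarith
      have : -p ≤ (1 - p) * Real.log (1 - p) := by
        have := mul_le_mul_of_nonneg_left hlp h1p.le
        rw [mul_neg, mul_div_cancel₀ _ h1p.ne'] at this
        linarith
      nlinarith
  nlinarith

/-- Theorem 2, noncoherent case, lower bound: quantizing the real and imaginary parts of
the noncoherent channel output separately with one-bit quantizers achieves a capacity per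
unit-energy of at least `2·Q(1)/σ²`, where `Q(1) = P(N(0,1) ≥ 1)`. Given input `x`, the two
output components are independent centered real Gaussians of variance `(|x|² + σ²)/2`. -/
theorem noncoherent_two_bit_lower_bound (σ : ℝ) (hσ : 0 < σ) :
    ENNReal.ofReal (2 * ((gaussianReal 0 1) {u : ℝ | 1 ≤ u}).toReal / σ ^ 2) ≤
      ⨆ (ξ : ℂ) (_ : ξ ≠ 0) (DR : Set ℝ) (_ : MeasurableSet DR) (DI : Set ℝ)
        (_ : MeasurableSet DI),
        (bre ((gaussianReal 0 (((‖ξ‖ ^ 2 + σ ^ 2) / 2).toNNReal)) DR).toReal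
            ((gaussianReal 0 ((σ ^ 2 / 2).toNNReal)) DR).toReal +
          bre ((gaussianReal 0 (((‖ξ‖ ^ 2 + σ ^ 2) / 2).toNNReal)) DI).toReal
            ((gaussianReal 0 ((σ ^ 2 / 2).toNNReal)) DI).toReal) /
          ENNReal.ofReal (‖ξ‖ ^ 2) := by
  have hs98 : Real.sqrt 98 = 7 * Real.sqrt 2 := by
    rw [show (98:ℝ) = 7 ^ 2 * 2 by norm_num, Real.sqrt_mul (by positivity),
      Real.sqrt_sq (by norm_num)]
  set a : ℝ := Real.sqrt 98 * σ with ha_def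
  have ha : 0 < a := mul_pos (Real.sqrt_pos.mpr (by norm_num)) hσ
  set D : Set ℝ := {x : ℝ | a ≤ |x|} with hD_def
  have hDmeas : MeasurableSet D :=
    (isClosed_le continuous_const _root_.continuous_abs).measurableSet
  set ξ : ℂ := ((Real.sqrt 195 * σ : ℝ) : ℂ) with hξ_def
  have hr195 : (0:ℝ) < Real.sqrt 195 * σ := mul_pos (Real.sqrt_pos.mpr (by norm_num)) hσ
  have hξabs : ‖ξ‖ ^ 2 = 195 * σ ^ 2 := by
    rw [hξ_def, Complex.norm_real, Real.norm_eq_abs, abs_of_pos hr195, mul_pow,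
      Real.sq_sqrt (by norm_num : (0:ℝ) ≤ 195)]
  have hξ0 : ξ ≠ 0 := by
    rw [hξ_def]
    exact_mod_cast Complex.ofReal_ne_zero.mpr hr195.ne'
  refine le_trans ?_ (le_iSup_of_le ξ (le_iSup_of_le hξ0 (le_iSup_of_le D (le_iSup_of_le hDmeas
    (le_iSup_of_le D (le_iSup_of_le hDmeas le_rfl))))))
  have hv1 : ((‖ξ‖ ^ 2 + σ ^ 2) / 2 : ℝ) = a ^ 2 := by
    rw [hξabs, ha_def, mul_pow, Real.sq_sqrt (by norm_num : (0:ℝ) ≤ 98)]; ring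
  have hpmeas : (gaussianReal 0 (((‖ξ‖ ^ 2 + σ ^ 2) / 2).toNNReal)) D
      = 2 * (gaussianReal 0 1) {x : ℝ | (1:ℝ) ≤ x} := by
    rw [hv1]
    have hDD : D = {x : ℝ | (1:ℝ) * a ≤ |x|} := by rw [hD_def]; simp
    rw [hDD, gauss_scale a 1 ha, gauss_two_sided 1 one_pos]
  have hv2 : (σ ^ 2 / 2 : ℝ) = (σ / Real.sqrt 2) ^ 2 := by
    rw [div_pow, Real.sq_sqrt (by norm_num : (0:ℝ) ≤ 2)]
  have h14a : (14 : ℝ) * (σ / Real.sqrt 2) = a := by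
    rw [ha_def, hs98]
    have h2 : Real.sqrt 2 ≠ 0 := by positivity
    field_simp
    nlinarith [Real.mul_self_sqrt (by norm_num : (0:ℝ) ≤ 2)]
  have hqmeas : (gaussianReal 0 ((σ ^ 2 / 2).toNNReal)) D
      = 2 * (gaussianReal 0 1) {x : ℝ | (14:ℝ) ≤ x} := by
    rw [hv2]
    have hDD : D = {x : ℝ | (14:ℝ) * (σ / Real.sqrt 2) ≤ |x|} := by rw [hD_def, h14a]
    rw [hDD, gauss_scale _ 14 (by positivity), gauss_two_sided 14 (by norm_num)]
  set Q1 : ℝ := ((gaussianReal 0 1) {u : ℝ | 1 ≤ u}).toReal with hQ1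
  set p : ℝ := ((gaussianReal 0 (((‖ξ‖ ^ 2 + σ ^ 2) / 2).toNNReal)) D).toReal with hp
  set q : ℝ := ((gaussianReal 0 ((σ ^ 2 / 2).toNNReal)) D).toReal with hq
  have hp2Q1 : p = 2 * Q1 := by
    rw [hp, hpmeas, ENNReal.toReal_mul, hQ1]
    norm_num
  have hqle : q ≤ Real.exp (-98) / (7 * Real.sqrt (2 * Real.pi)) := by
    have h1 : q = 2 * ((gaussianReal 0 1) {x : ℝ | (14:ℝ) ≤ x}).toReal := by
      rw [hq, hqmeas, ENNReal.toReal_mul]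
      norm_num
    have h2 := Q14_bound
    have hs : (0:ℝ) < Real.sqrt (2 * Real.pi) := by positivity
    rw [h1]
    rw [show Real.exp (-98) / (7 * Real.sqrt (2 * Real.pi))
        = 2 * (Real.exp (-98) / (14 * Real.sqrt (2 * Real.pi))) by field_simp; ring]
    linarith
  have hq0' : 0 ≤ q := ENNReal.toReal_nonneg
  have hQ1lb : Real.exp (-2) ≤ 2.51 * Q1 := by
    have h := Q1_lb
    rw [div_le_iff₀ (by norm_num : (0:ℝ) < 2.51)] at h
    linarith
  have hp1 : p ≤ 1 := by
    rw [hp]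
    exact ENNReal.toReal_le_of_le_ofReal zero_le_one (by simpa using prob_le_one)
  clear_value q p Q1
  clear hp hq hQ1 hpmeas hqmeas hv1 hv2
  have h03 : (1.3:ℝ) ≤ Real.exp 0.3 := by
    have := Real.add_one_le_exp (0.3:ℝ); linarith
  have hple : Real.exp (-2.3) ≤ p := by
    have h1 : Real.exp (-2.3) * Real.exp 0.3 = Real.exp (-2) := by
      rw [← Real.exp_add]; norm_num
    have h2 : Real.exp (-2.3) * 1.3 ≤ Real.exp (-2) := by
      calc Real.exp (-2.3) * 1.3 ≤ Real.exp (-2.3) * Real.exp 0.3 := by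
            nlinarith [Real.exp_pos (-2.3:ℝ)]
        _ = Real.exp (-2) := h1
    rw [hp2Q1]
    linarith [Real.exp_pos (-2.3:ℝ)]
  have hp0 : 0 < p := lt_of_lt_of_le (Real.exp_pos _) hple
  by_cases hcase : (q = 0 ∨ q = 1) ∧ p ≠ q
  · simp only [bre, if_pos hcase]
    rw [show ((⊤:ℝ≥0∞) + ⊤) = ⊤ by simp,
      ENNReal.top_div_of_ne_top ENNReal.ofReal_ne_top]
    exact le_top
  · have hq0 : 0 < q := by
      rcases eq_or_lt_of_le hq0' with h0 | h0
      · exfalso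
        push_neg at hcase
        have := hcase (Or.inl h0.symm)
        rw [this, ← h0] at hp0
        exact lt_irrefl 0 hp0
      · exact h0
    simp only [bre, if_neg hcase]
    set d : ℝ := p * Real.log (p / q) + (1 - p) * Real.log ((1 - p) / (1 - q)) with hd
    clear_value d
    have hdge : 97.5 * p ≤ d := by
      rw [hd]; exact core_ineq p q hq0 hqle hp0 hp1 hple
    have hd0 : 0 ≤ d := le_trans (by positivity) hdge
    rw [← ENNReal.ofReal_add hd0 hd0, hξabs,
      ← ENNReal.ofReal_div_of_pos (by positivity)]
    apply ENNReal.ofReal_le_ofReal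
    rw [div_le_div_iff₀ (by positivity) (by positivity)]
    rw [hp2Q1] at hdge
    have h390 : 390 * Q1 ≤ 2 * d := by linarith
    calc 2 * Q1 * (195 * σ ^ 2) = (390 * Q1) * σ ^ 2 := by ring
      _ ≤ (2 * d) * σ ^ 2 := mul_le_mul_of_nonneg_right h390 (sq_nonneg σ)
      _ = (d + d) * σ ^ 2 := by ring
end
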